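/- arXiv:1101.1161 — 8 statements merged into one kernel-verified Lean document; each statement's English description precedes it below -/
import Mathlib

section
/- Let (a_n)_{n≥0} be a sequence of nonnegative reals and A(t) = ∑_{n=0}^∞ a_n t^n. Let h : ℕ → (0,1) be an increasing sequence such that 0 < liminf_{n→∞} h(n)^n ≤ limsup_{n→∞} h(n)^n < 1. Suppose there exist N₀ ∈ ℕ and x > 0 such that for every N ≥ N₀ and every integer m ≥ 0, ∑_{n=mN}^{(m+1)N−1} a_n ≤ x·∑_{n=0}^{N−1} a_n. Then A(h(n)) < ∞ for all n ≥ N₀, and there exist constants 0 < c₁ < c₂ and M ∈ ℕ such that c₁·∑_{k=0}^{n} a_k ≤ A(h(n)) ≤ c₂·∑_{k=0}^{n} a_k for all n ≥ M. -/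
private lemma key_lemma (a : ℕ → ℝ) (ha : ∀ n, 0 ≤ a n) (t : ℝ) (ht0 : 0 < t) (ht1 : t < 1)
    (N : ℕ) (hN : 1 ≤ N) (x : ℝ)
    (hb : ∀ m : ℕ, ∑ n ∈ Finset.Ico (m * N) ((m + 1) * N), a n ≤ x * ∑ n ∈ Finset.range N, a n) :
    Summable (fun k => a k * t ^ k) ∧
    ∑' k, a k * t ^ k ≤ (x * ∑ n ∈ Finset.range N, a n) * (1 - t ^ N)⁻¹ := by
  set B : ℝ := x * ∑ n ∈ Finset.range N, a n with hB
  have hB0 : 0 ≤ B := by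
    have h0 := hb 0
    rw [show (0+1)*N = N by ring, Nat.zero_mul] at h0
    exact le_trans (Finset.sum_nonneg fun i _ => ha i) h0
  have htN : t ^ N < 1 := pow_lt_one₀ ht0.le ht1 (by omega)
  have htN0 : (0:ℝ) ≤ t ^ N := pow_nonneg ht0.le N
  -- block bound
  have hblock : ∀ K, ∑ k ∈ Finset.range (K * N), a k * t ^ k
      ≤ ∑ j ∈ Finset.range K, (t ^ N) ^ j * B := by
    intro K
    induction K with
    | zero => simp
    | succ K ih =>
      have hsplit : ∑ k ∈ Finset.range ((K + 1) * N), a k * t ^ k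
          = ∑ k ∈ Finset.range (K * N), a k * t ^ k
            + ∑ k ∈ Finset.Ico (K * N) ((K + 1) * N), a k * t ^ k := by
        rw [show Finset.range ((K + 1) * N) = Finset.Ico 0 ((K + 1) * N) from Finset.range_eq_Ico _,
          show Finset.range (K * N) = Finset.Ico 0 (K * N) from Finset.range_eq_Ico _]
        exact (Finset.sum_Ico_consecutive _ (Nat.zero_le _)
          (Nat.mul_le_mul_right N (by omega))).symm
      rw [hsplit, Finset.sum_range_succ]
      refine add_le_add ih ?_
      calc ∑ k ∈ Finset.Ico (K * N) ((K + 1) * N), a k * t ^ k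
          ≤ ∑ k ∈ Finset.Ico (K * N) ((K + 1) * N), a k * t ^ (K * N) := by
            refine Finset.sum_le_sum fun i hi => ?_
            have hi' := (Finset.mem_Ico.1 hi).1
            exact mul_le_mul_of_nonneg_left
              (pow_le_pow_of_le_one ht0.le ht1.le hi') (ha i)
        _ = t ^ (K * N) * ∑ k ∈ Finset.Ico (K * N) ((K + 1) * N), a k := by
            rw [Finset.mul_sum]; exact Finset.sum_congr rfl fun i _ => mul_comm _ _
        _ ≤ t ^ (K * N) * B := by
            exact mul_le_mul_of_nonneg_left (hb K) (pow_nonneg ht0.le _)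
        _ = (t ^ N) ^ K * B := by rw [← pow_mul, Nat.mul_comm]
  have hgeom : ∀ K, ∑ j ∈ Finset.range K, (t ^ N) ^ j ≤ (1 - t ^ N)⁻¹ := by
    intro K
    rw [← tsum_geometric_of_lt_one htN0 htN]
    exact Summable.sum_le_tsum _ (fun i _ => pow_nonneg htN0 i)
      (summable_geometric_of_lt_one htN0 htN)
  have hpartial : ∀ K, ∑ k ∈ Finset.range K, a k * t ^ k ≤ B * (1 - t ^ N)⁻¹ := by
    intro K
    calc ∑ k ∈ Finset.range K, a k * t ^ k ≤ ∑ k ∈ Finset.range (K * N), a k * t ^ k := by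
          refine Finset.sum_le_sum_of_subset_of_nonneg ?_ fun i _ _ =>
            mul_nonneg (ha i) (pow_nonneg ht0.le i)
          exact Finset.range_subset_range.2 (Nat.le_mul_of_pos_right K (by omega))
      _ ≤ ∑ j ∈ Finset.range K, (t ^ N) ^ j * B := hblock K
      _ = (∑ j ∈ Finset.range K, (t ^ N) ^ j) * B := by rw [Finset.sum_mul]
      _ ≤ (1 - t ^ N)⁻¹ * B :=
          mul_le_mul_of_nonneg_right (hgeom K) hB0
      _ = B * (1 - t ^ N)⁻¹ := mul_comm _ _
  have hsum : Summable (fun k => a k * t ^ k) :=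
    summable_of_sum_range_le (fun i => mul_nonneg (ha i) (pow_nonneg ht0.le i)) hpartial
  exact ⟨hsum, Summable.tsum_le_of_sum_range_le hsum hpartial⟩

theorem stmt_0 (a : ℕ → ℝ) (ha : ∀ n, 0 ≤ a n)
    (h : ℕ → ℝ) (hpos : ∀ n, 0 < h n) (hlt1 : ∀ n, h n < 1) (hmono : Monotone h)
    (hliminf : 0 < Filter.liminf (fun n => h n ^ n) Filter.atTop)
    (hlimsup : Filter.limsup (fun n => h n ^ n) Filter.atTop < 1)
    (N₀ : ℕ) (x : ℝ) (hx : 0 < x)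
    (hb : ∀ N, N₀ ≤ N → ∀ m : ℕ,
      ∑ n ∈ Finset.Ico (m * N) ((m + 1) * N), a n ≤ x * ∑ n ∈ Finset.range N, a n) :
    (∀ n, N₀ ≤ n → Summable (fun k => a k * h n ^ k)) ∧
    ∃ c₁ c₂ : ℝ, ∃ M : ℕ, 0 < c₁ ∧ c₁ < c₂ ∧ ∀ n, M ≤ n →
      c₁ * ∑ k ∈ Finset.range (n + 1), a k ≤ ∑' k, a k * h n ^ k ∧
      ∑' k, a k * h n ^ k ≤ c₂ * ∑ k ∈ Finset.range (n + 1), a k := by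
  have hsum : ∀ n, Summable (fun k => a k * h n ^ k) := fun n =>
    (key_lemma a ha (h n) (hpos n) (hlt1 n) (N₀ + 1) (by omega) x (hb (N₀ + 1) (by omega))).1
  refine ⟨fun n _ => hsum n, ?_⟩
  -- constants from liminf/limsup
  set L : ℝ := Filter.limsup (fun n => h n ^ n) Filter.atTop with hLdef
  set c : ℝ := Filter.liminf (fun n => h n ^ n) Filter.atTop with hcdef
  have hbdd_above : Filter.IsBoundedUnder (· ≤ ·) Filter.atTop (fun n => h n ^ n) :=
    Filter.isBoundedUnder_of ⟨1, fun n => pow_le_one₀ (hpos n).le (hlt1 n).le⟩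
  have hbdd_below : Filter.IsBoundedUnder (· ≥ ·) Filter.atTop (fun n => h n ^ n) :=
    Filter.isBoundedUnder_of ⟨0, fun n => pow_nonneg (hpos n).le n⟩
  have hL1 : L < 1 := hlimsup
  have hc0 : 0 < c := hliminf
  have hev1 : ∀ᶠ n in Filter.atTop, c / 2 < h n ^ n :=
    Filter.eventually_lt_of_lt_liminf (by linarith) hbdd_below
  have hev2 : ∀ᶠ n in Filter.atTop, h n ^ n < (L + 1) / 2 :=
    Filter.eventually_lt_of_limsup_lt (by linarith) hbdd_above
  obtain ⟨M₁, hM₁⟩ := Filter.eventually_atTop.1 hev1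
  obtain ⟨M₂, hM₂⟩ := Filter.eventually_atTop.1 hev2
  have hL0 : 0 ≤ L := Filter.le_limsup_of_frequently_le
    (Filter.Frequently.of_forall fun n => pow_nonneg (hpos n).le n) hbdd_above
  have hL' : (L + 1) / 2 < 1 := by linarith
  have hL'0 : 0 ≤ (L + 1) / 2 := by linarith
  set c₂' : ℝ := x * (1 - (L + 1) / 2)⁻¹ with hc₂'
  have hc₂'pos : 0 < c₂' := mul_pos hx (inv_pos.2 (by linarith))
  refine ⟨c / 2, c / 2 + c₂', max (max M₁ M₂) N₀, by linarith, by linarith, ?_⟩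
  intro n hn
  have hn₁ : M₁ ≤ n := le_trans (le_trans (le_max_left _ _) (le_max_left _ _)) hn
  have hn₂ : M₂ ≤ n := le_trans (le_trans (le_max_right _ _) (le_max_left _ _)) hn
  have hn₀ : N₀ ≤ n := le_trans (le_max_right _ _) hn
  have hS0 : 0 ≤ ∑ k ∈ Finset.range (n + 1), a k := Finset.sum_nonneg fun i _ => ha i
  constructor
  · -- lower bound
    calc c / 2 * ∑ k ∈ Finset.range (n + 1), a k
        ≤ h n ^ n * ∑ k ∈ Finset.range (n + 1), a k :=
          mul_le_mul_of_nonneg_right (hM₁ n hn₁).le hS0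
      _ = ∑ k ∈ Finset.range (n + 1), a k * h n ^ n := by
          rw [Finset.mul_sum]; exact Finset.sum_congr rfl fun i _ => mul_comm _ _
      _ ≤ ∑ k ∈ Finset.range (n + 1), a k * h n ^ k := by
          refine Finset.sum_le_sum fun i hi => ?_
          have hi' : i ≤ n := Nat.lt_succ_iff.1 (Finset.mem_range.1 hi)
          exact mul_le_mul_of_nonneg_left
            (pow_le_pow_of_le_one (hpos n).le (hlt1 n).le hi') (ha i)
      _ ≤ ∑' k, a k * h n ^ k :=
          Summable.sum_le_tsum _ (fun i _ => mul_nonneg (ha i) (pow_nonneg (hpos n).le i)) (hsum n)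
  · -- upper bound
    have hkey := (key_lemma a ha (h n) (hpos n) (hlt1 n) (n + 1) (by omega) x
      (hb (n + 1) (by omega))).2
    have hpowle : h n ^ (n + 1) ≤ (L + 1) / 2 := by
      calc h n ^ (n + 1) ≤ h n ^ n :=
        pow_le_pow_of_le_one (hpos n).le (hlt1 n).le (by omega)
      _ ≤ (L + 1) / 2 := (hM₂ n hn₂).le
    have hinv : (1 - h n ^ (n + 1))⁻¹ ≤ (1 - (L + 1) / 2)⁻¹ := by
      apply inv_anti₀ (by linarith) (by linarith)
    calc ∑' k, a k * h n ^ k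
        ≤ (x * ∑ k ∈ Finset.range (n + 1), a k) * (1 - h n ^ (n + 1))⁻¹ := hkey
      _ ≤ (x * ∑ k ∈ Finset.range (n + 1), a k) * (1 - (L + 1) / 2)⁻¹ :=
          mul_le_mul_of_nonneg_left hinv (mul_nonneg hx.le hS0)
      _ = c₂' * ∑ k ∈ Finset.range (n + 1), a k := by ring
      _ ≤ (c / 2 + c₂') * ∑ k ∈ Finset.range (n + 1), a k := by nlinarith
end

section
/- Let (a_n)_{n≥0} be nonnegative reals, k ≥ 0 an integer with ∑_{n=0}^∞ a_n n^k < ∞ and ∑_{n=0}^∞ a_n n^{k+1} = ∞, let c > 0, and let w ∈ 𝒲. Define A^{(k)}(t) = ∑_{n≥k} n(n−1)⋯(n−k+1) a_n t^{n−k} for t ∈ [0,1], with A^{(k)}(1) = lim_{t↑1} A^{(k)}(t) (which is finite). Then ∑_{n=0}^∞ a_n n^k w(n) < ∞ if and only if ∑_{n=1}^∞ n·(Δw(n) − Δw(n+1))·[A^{(k)}(1) − A^{(k)}(1 − 1/(cn))] < ∞. -/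
open Filter ENNReal

section AUX
open Filter ENNReal

/-- Nonneg summability iff ENNReal sum finite. -/
lemma aux_summable_iff_ofReal {f : ℕ → ℝ} (hf : ∀ n, 0 ≤ f n) :
    Summable f ↔ ∑' n, ENNReal.ofReal (f n) ≠ ∞ := by
  constructor
  · intro h
    rw [← ENNReal.ofReal_tsum_of_nonneg hf h]
    exact ENNReal.ofReal_ne_top
  · intro h
    exact (ENNReal.summable_toReal h).congr fun n => ENNReal.toReal_ofReal (hf n)

lemma aux_pow_ub {t : ℝ} (ht0 : 0 ≤ t) (ht1 : t ≤ 1) (j : ℕ) :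
    1 - t ^ j ≤ min 1 ((j : ℝ) * (1 - t)) := by
  refine le_min (by nlinarith [pow_nonneg ht0 j]) ?_
  have hb := one_add_mul_le_pow (a := t - 1) (by linarith) j
  have : (1 + (t-1)) ^ j = t ^ j := by ring_nf
  nlinarith

lemma aux_pow_lb {u : ℝ} (hu0 : 0 ≤ u) (hu1 : u ≤ 1) (j : ℕ) :
    min 1 ((j : ℝ) * u) / 2 ≤ 1 - (1 - u) ^ j := by
  set s := (1 - u) ^ j with hs
  have hs0 : 0 ≤ s := pow_nonneg (by linarith) j
  have h1 : s * (1 + (j:ℝ) * u) ≤ 1 := by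
    have hb : 1 + (j:ℝ) * u ≤ (1 + u) ^ j := one_add_mul_le_pow (by linarith) j
    have h2 : s * (1 + u) ^ j ≤ 1 := by
      have : s * (1 + u) ^ j = ((1-u)*(1+u)) ^ j := by rw [hs, ← mul_pow]
      rw [this]
      have h3 : ((1-u)*(1+u)) = 1 - u^2 := by ring
      rw [h3]
      exact pow_le_one₀ (by nlinarith) (by nlinarith)
    calc s * (1 + (j:ℝ)*u) ≤ s * (1+u)^j := by
          exact mul_le_mul_of_nonneg_left hb hs0
      _ ≤ 1 := h2
  have hju : 0 ≤ (j:ℝ) * u := by positivity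
  rcases le_total ((j:ℝ)*u) 1 with h | h
  · rw [min_eq_right h]
    rcases le_total s (1/2) with h2 | h2
    · nlinarith
    · nlinarith
  · rw [min_eq_left h]
    nlinarith

lemma aux_min_le {K i z mR : ℝ} (hK : 1 ≤ K) (hi : 0 ≤ i) (hmz : mR ≤ K * z) :
    min mR i ≤ K * min i z := by
  rcases le_total i z with h | h
  · rw [min_eq_left h]
    calc min mR i ≤ i := min_le_right _ _
      _ ≤ K * i := le_mul_of_one_le_left hi hK
  · rw [min_eq_right h]
    exact (min_le_left _ _).trans hmz

lemma aux_hasSum_d (w : ℕ → ℝ)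
    (hwdec : ∀ n, w (n + 2) - w (n + 1) ≤ w (n + 1) - w n)
    (hwlim : Filter.Tendsto (fun n => w (n + 1) - w n) Filter.atTop (nhds 0))
    (j : ℕ) :
    HasSum (fun i => (w (j + i + 1) - w (j + i)) - (w (j + i + 2) - w (j + i + 1)))
      (w (j + 1) - w j) := by
  have hnn : ∀ i : ℕ, 0 ≤ (w (j + i + 1) - w (j + i)) - (w (j + i + 2) - w (j + i + 1)) := by
    intro i
    have := hwdec (j + i)
    linarith
  rw [hasSum_iff_tendsto_nat_of_nonneg hnn]
  have hps : (fun M : ℕ => ∑ i ∈ Finset.range M,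
      ((w (j + i + 1) - w (j + i)) - (w (j + i + 2) - w (j + i + 1))))
      = fun M => (w (j + 1) - w j) - (w (j + M + 1) - w (j + M)) := by
    funext M
    exact Finset.sum_range_sub' (f := fun i => w (j + i + 1) - w (j + i)) M
  rw [hps]
  have htail : Tendsto (fun M : ℕ => w (j + M + 1) - w (j + M)) atTop (nhds 0) := by
    have := hwlim.comp (tendsto_add_atTop_nat j)
    simpa [Function.comp_def, Nat.add_comm] using this
  have := (tendsto_const_nhds (x := w (j+1) - w j) (f := atTop (α := ℕ))).sub htail
  simpa using this

lemma aux_w_repr (w : ℕ → ℝ) (hwmono : Monotone w)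
    (hwdec : ∀ n, w (n + 2) - w (n + 1) ≤ w (n + 1) - w n)
    (hwlim : Filter.Tendsto (fun n => w (n + 1) - w n) Filter.atTop (nhds 0))
    (n : ℕ) :
    ENNReal.ofReal (w n - w 0)
      = ∑' m : ℕ, ((min n (m + 1) : ℕ) : ℝ≥0∞) *
          ENNReal.ofReal ((w (m + 1) - w m) - (w (m + 2) - w (m + 1))) := by
  set dd : ℕ → ℝ≥0∞ := fun m => ENNReal.ofReal ((w (m + 1) - w m) - (w (m + 2) - w (m + 1)))
    with hdd
  have h1 : w n - w 0 = ∑ i ∈ Finset.range n, (w (i + 1) - w i) :=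
    (Finset.sum_range_sub w n).symm
  rw [h1, ENNReal.ofReal_sum_of_nonneg (fun i _ => sub_nonneg.2 (hwmono (Nat.le_succ i)))]
  have h2 : ∀ i : ℕ, ENNReal.ofReal (w (i + 1) - w i)
      = ∑' m : ℕ, (if i ≤ m then dd m else 0) := by
    intro i
    have hhs := aux_hasSum_d w hwdec hwlim i
    have hnn : ∀ l : ℕ, 0 ≤ (w (i + l + 1) - w (i + l)) - (w (i + l + 2) - w (i + l + 1)) := by
      intro l; have := hwdec (i + l); linarith
    rw [← hhs.tsum_eq, ENNReal.ofReal_tsum_of_nonneg hnn hhs.summable]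
    have hshift : ∑' l : ℕ, dd (i + l) = ∑' m : ℕ, (if i ≤ m then dd m else 0) := by
      have hg : Function.Injective (fun l : ℕ => i + l) := add_right_injective i
      have hsupp : Function.support (fun m => if i ≤ m then dd m else 0)
          ⊆ Set.range (fun l : ℕ => i + l) := by
        intro m hm
        by_cases him : i ≤ m
        · exact ⟨m - i, show i + (m - i) = m by omega⟩
        · simp [him] at hm
      have := hg.tsum_eq (f := fun m => if i ≤ m then dd m else 0) hsupp
      simpa [Nat.le_add_right] using this
    rw [← hshift]
  simp_rw [h2]
  rw [← Summable.tsum_finsetSum (fun i _ => ENNReal.summable)]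
  congr 1
  funext m
  rw [← Finset.sum_filter]
  have hfil : (Finset.range n).filter (fun i => i ≤ m) = Finset.range (min n (m + 1)) := by
    ext x; simp only [Finset.mem_filter, Finset.mem_range, Finset.mem_range]; omega
  rw [hfil, Finset.sum_const, Finset.card_range, nsmul_eq_mul]

lemma aux_nat_pow_desc (m k : ℕ) (hm : 2 * k ≤ m) :
    m ^ k ≤ 2 ^ k * m.descFactorial k := by
  calc m ^ k ≤ (2 * (m - k)) ^ k := Nat.pow_le_pow_left (by omega) k
    _ = 2 ^ k * (m - k) ^ k := by rw [mul_pow]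
    _ ≤ 2 ^ k * (m + 1 - k) ^ k := by
        exact Nat.mul_le_mul_left _ (Nat.pow_le_pow_left (by omega) k)
    _ ≤ 2 ^ k * m.descFactorial k := by
        exact Nat.mul_le_mul_left _ (Nat.pow_sub_le_descFactorial m k)

lemma aux_main_ineq {c : ℝ} (hc : 0 < c) (i : ℝ) (hi : 0 ≤ i) (m k : ℕ)
    (hm : 2 * k + 1 ≤ m) {am : ℝ} (ham : 0 ≤ am) :
    am * (m : ℝ) ^ k * min (m : ℝ) i ≤
      (2 ^ k * max 1 (2 * c)) * ((m.descFactorial k : ℝ) * am * min i (((m - k : ℕ) : ℝ) / c)) := by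
  have hpow : (m : ℝ) ^ k ≤ 2 ^ k * (m.descFactorial k : ℝ) := by
    have := aux_nat_pow_desc m k (by omega)
    calc (m : ℝ) ^ k = ((m ^ k : ℕ) : ℝ) := by push_cast; ring
      _ ≤ ((2 ^ k * m.descFactorial k : ℕ) : ℝ) := by exact_mod_cast this
      _ = 2 ^ k * (m.descFactorial k : ℝ) := by push_cast; ring
  have hK : (1 : ℝ) ≤ max 1 (2 * c) := le_max_left _ _
  have hmin : min (m : ℝ) i ≤ max 1 (2 * c) * min i (((m - k : ℕ) : ℝ) / c) := by
    apply aux_min_le hK hi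
    have h2c : 2 * c ≤ max 1 (2 * c) := le_max_right _ _
    have hmk : (m : ℝ) ≤ 2 * ((m - k : ℕ) : ℝ) := by
      have : m ≤ 2 * (m - k) := by omega
      exact_mod_cast this
    calc (m : ℝ) ≤ 2 * ((m - k : ℕ) : ℝ) := hmk
      _ = (2 * c) * (((m - k : ℕ) : ℝ) / c) := by field_simp
      _ ≤ max 1 (2 * c) * (((m - k : ℕ) : ℝ) / c) := by
          apply mul_le_mul_of_nonneg_right h2c
          positivity
  have h1 : am * (m : ℝ) ^ k * min (m : ℝ) i ≤
      am * (2 ^ k * (m.descFactorial k : ℝ)) * (max 1 (2 * c) * min i (((m - k : ℕ) : ℝ) / c)) := by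
    apply mul_le_mul (mul_le_mul_of_nonneg_left hpow ham) hmin
    · rcases le_total (m : ℝ) i with h | h
      · rw [min_eq_left h]; positivity
      · rw [min_eq_right h]; exact hi
    · positivity
  calc am * (m : ℝ) ^ k * min (m : ℝ) i ≤ _ := h1
    _ = (2 ^ k * max 1 (2 * c)) * ((m.descFactorial k : ℝ) * am * min i (((m - k : ℕ) : ℝ) / c)) := by
      ring

lemma aux_key {c : ℝ} (hc : 0 < c) (x : ℝ) (hx1 : 1 ≤ c * x) (j : ℕ) :
    x * (1 - (1 - 1 / (c * x)) ^ j) ≤ min x ((j : ℝ) / c) ∧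
    min x ((j : ℝ) / c) / 2 ≤ x * (1 - (1 - 1 / (c * x)) ^ j) := by
  have hx0 : 0 < x := by nlinarith
  have hu0 : 0 < 1 / (c * x) := by positivity
  have hu1 : 1 / (c * x) ≤ 1 := by
    rw [div_le_one (by positivity)]; linarith
  set u := 1 / (c * x) with hu
  have ht0 : 0 ≤ 1 - u := by linarith
  have ht1 : 1 - u ≤ 1 := by linarith
  have hxu : x * ((j : ℝ) * u) = (j : ℝ) / c := by
    rw [hu]; field_simp
  have hxmin : x * min 1 ((j : ℝ) * u) = min x ((j : ℝ) / c) := by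
    rw [mul_min_of_nonneg _ _ (le_of_lt hx0), mul_one, hxu]
  constructor
  · have h := aux_pow_ub ht0 ht1 j
    have h2 : (1 : ℝ) - (1 - u) = u := by ring
    rw [h2] at h
    calc x * (1 - (1 - u) ^ j) ≤ x * min 1 ((j : ℝ) * u) :=
          mul_le_mul_of_nonneg_left h (le_of_lt hx0)
      _ = min x ((j : ℝ) / c) := hxmin
  · have h := aux_pow_lb (le_of_lt hu0) hu1 j
    calc min x ((j : ℝ) / c) / 2 = x * (min 1 ((j : ℝ) * u) / 2) := by
          rw [← hxmin]; ring
      _ ≤ x * (1 - (1 - u) ^ j) := mul_le_mul_of_nonneg_left h (le_of_lt hx0)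

lemma aux_b_summable (a : ℕ → ℝ) (ha : ∀ n, 0 ≤ a n) (k : ℕ)
    (hk : Summable (fun n => a n * (n : ℝ) ^ k)) :
    Summable (fun m => (m.descFactorial k : ℝ) * a m) := by
  apply Summable.of_nonneg_of_le (fun m => mul_nonneg (Nat.cast_nonneg _) (ha m)) _ hk
  intro m
  calc (m.descFactorial k : ℝ) * a m ≤ (m : ℝ) ^ k * a m := by
        apply mul_le_mul_of_nonneg_right _ (ha m)
        calc (m.descFactorial k : ℝ) ≤ ((m ^ k : ℕ) : ℝ) :=
              by exact_mod_cast m.descFactorial_le_pow k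
          _ = (m : ℝ) ^ k := by push_cast; ring
    _ = a m * (m : ℝ) ^ k := by ring

lemma aux_At_summable (a : ℕ → ℝ) (ha : ∀ n, 0 ≤ a n) (k : ℕ)
    (hk : Summable (fun n => a n * (n : ℝ) ^ k))
    {t : ℝ} (ht0 : 0 ≤ t) (ht1 : t ≤ 1) :
    Summable (fun m => (m.descFactorial k : ℝ) * a m * t ^ (m - k)) := by
  apply Summable.of_nonneg_of_le (fun m => mul_nonneg (mul_nonneg (Nat.cast_nonneg _) (ha m)) (pow_nonneg ht0 _)) _ (aux_b_summable a ha k hk)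
  intro m
  have := pow_le_one₀ ht0 ht1 (n := m - k)
  nlinarith [mul_nonneg (Nat.cast_nonneg (m.descFactorial k) : (0:ℝ) ≤ _) (ha m),
    pow_nonneg ht0 (m - k)]

lemma aux_diff (a : ℕ → ℝ) (ha : ∀ n, 0 ≤ a n) (k : ℕ)
    (hk : Summable (fun n => a n * (n : ℝ) ^ k))
    {t : ℝ} (ht0 : 0 ≤ t) (ht1 : t ≤ 1) {x : ℝ} (hx : 0 ≤ x) :
    ENNReal.ofReal (x * ((∑' m : ℕ, (m.descFactorial k : ℝ) * a m * (1 : ℝ) ^ (m - k)) -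
        ∑' m : ℕ, (m.descFactorial k : ℝ) * a m * t ^ (m - k)))
      = ∑' m : ℕ, ENNReal.ofReal ((m.descFactorial k : ℝ) * a m) *
          ENNReal.ofReal (x * (1 - t ^ (m - k))) := by
  have hb := aux_b_summable a ha k hk
  have hAt := aux_At_summable a ha k hk ht0 ht1
  have hA1 : (∑' m : ℕ, (m.descFactorial k : ℝ) * a m * (1 : ℝ) ^ (m - k))
      = ∑' m : ℕ, (m.descFactorial k : ℝ) * a m := by
    apply tsum_congr; intro m; rw [one_pow, mul_one]
  rw [hA1, ← Summable.tsum_sub hb hAt, ← tsum_mul_left]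
  have hnn : ∀ m : ℕ, 0 ≤ x * ((m.descFactorial k : ℝ) * a m -
      (m.descFactorial k : ℝ) * a m * t ^ (m - k)) := by
    intro m
    have h1 : t ^ (m - k) ≤ 1 := pow_le_one₀ ht0 ht1
    have h2 : (0:ℝ) ≤ (m.descFactorial k : ℝ) * a m := mul_nonneg (Nat.cast_nonneg _) (ha m)
    have h3 : (0:ℝ) ≤ (m.descFactorial k : ℝ) * a m * (1 - t ^ (m - k)) :=
      mul_nonneg h2 (by linarith)
    nlinarith
  rw [ENNReal.ofReal_tsum_of_nonneg hnn (((hb.sub hAt)).mul_left x)]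
  apply tsum_congr; intro m
  rw [← ENNReal.ofReal_mul (mul_nonneg (Nat.cast_nonneg _) (ha m))]
  congr 1
  ring
end AUX

set_option maxHeartbeats 2000000 in
theorem stmt_1 (a : ℕ → ℝ) (ha : ∀ n, 0 ≤ a n) (k : ℕ)
    (hk : Summable (fun n => a n * (n : ℝ) ^ k))
    (hk1 : ¬ Summable (fun n => a n * (n : ℝ) ^ (k + 1)))
    (c : ℝ) (hc : 0 < c)
    (w : ℕ → ℝ) (hw0 : ∀ n, 0 ≤ w n) (hwmono : Monotone w)
    (hwdec : ∀ n, w (n + 2) - w (n + 1) ≤ w (n + 1) - w n)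
    (hwlim : Filter.Tendsto (fun n => w (n + 1) - w n) Filter.atTop (nhds 0)) :
    Summable (fun n => a n * (n : ℝ) ^ k * w n) ↔
    Summable (fun n : ℕ =>
      ((n : ℝ) + 1) * ((w (n + 1) - w n) - (w (n + 2) - w (n + 1))) *
        ((∑' m : ℕ, (m.descFactorial k : ℝ) * a m * (1 : ℝ) ^ (m - k)) -
          ∑' m : ℕ, (m.descFactorial k : ℝ) * a m *
            (1 - 1 / (c * ((n : ℝ) + 1))) ^ (m - k))) := by
  -- basic nonnegativity facts
  have hα0 : ∀ n : ℕ, (0:ℝ) ≤ a n * (n:ℝ) ^ k := fun n => mul_nonneg (ha n) (by positivity)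
  have hb0 : ∀ m : ℕ, (0:ℝ) ≤ (m.descFactorial k : ℝ) * a m :=
    fun m => mul_nonneg (Nat.cast_nonneg _) (ha m)
  have hd0 : ∀ m : ℕ, (0:ℝ) ≤ (w (m+1) - w m) - (w (m+2) - w (m+1)) := by
    intro m; have := hwdec m; linarith
  have hdesc : ∀ m : ℕ, (m.descFactorial k : ℝ) ≤ (m:ℝ) ^ k := by
    intro m
    calc (m.descFactorial k : ℝ) ≤ ((m ^ k : ℕ) : ℝ) := by exact_mod_cast m.descFactorial_le_pow k
      _ = (m:ℝ) ^ k := by push_cast; ring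
  -- ENNReal versions
  set α : ℕ → ℝ≥0∞ := fun n => ENNReal.ofReal (a n * (n:ℝ) ^ k) with hαdef
  set β : ℕ → ℝ≥0∞ := fun m => ENNReal.ofReal ((m.descFactorial k : ℝ) * a m) with hβdef
  set dd : ℕ → ℝ≥0∞ := fun m => ENNReal.ofReal ((w (m+1) - w m) - (w (m+2) - w (m+1))) with hdddef
  set T1 : ℕ → ℝ≥0∞ := fun i => ∑' n : ℕ, α n * ENNReal.ofReal (min (n:ℝ) (i:ℝ)) with hT1def
  set T2 : ℕ → ℝ≥0∞ :=
    fun i => ∑' m : ℕ, β m * ENNReal.ofReal (min (i:ℝ) (((m - k : ℕ):ℝ) / c)) with hT2def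
  have hβα : ∀ m, β m ≤ α m := by
    intro m
    apply ENNReal.ofReal_le_ofReal
    calc (m.descFactorial k : ℝ) * a m ≤ (m:ℝ)^k * a m :=
          mul_le_mul_of_nonneg_right (hdesc m) (ha m)
      _ = a m * (m:ℝ)^k := by ring
  have hSα : ∑' n, α n ≠ ⊤ := by
    rw [hαdef, ← ENNReal.ofReal_tsum_of_nonneg hα0 hk]
    exact ENNReal.ofReal_ne_top
  have hSβ : ∑' m, β m ≠ ⊤ :=
    ne_top_of_le_ne_top hSα (ENNReal.tsum_le_tsum hβα)
  have hSd : ∑' m, dd m ≠ ⊤ := by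
    have hs0 := aux_hasSum_d w hwdec hwlim 0
    have hs : HasSum (fun m => (w (m+1) - w m) - (w (m+2) - w (m+1))) (w 1 - w 0) := by
      simpa [Nat.zero_add] using hs0
    rw [hdddef, ← ENNReal.ofReal_tsum_of_nonneg hd0 hs.summable]
    exact ENNReal.ofReal_ne_top
  have hT2fin : ∀ i : ℕ, T2 i ≠ ⊤ := by
    intro i
    have hle : T2 i ≤ (∑' m, β m) * ENNReal.ofReal (i:ℝ) := by
      rw [hT2def, ← ENNReal.tsum_mul_right]
      apply ENNReal.tsum_le_tsum
      intro m
      exact mul_le_mul_right (ENNReal.ofReal_le_ofReal (min_le_left _ _)) _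
    exact ne_top_of_le_ne_top (ENNReal.mul_ne_top hSβ ENNReal.ofReal_ne_top) hle
  have hcast : ∀ n i : ℕ, ((min n i : ℕ) : ℝ≥0∞) = ENNReal.ofReal (min (n:ℝ) (i:ℝ)) := by
    intro n i
    rw [← ENNReal.ofReal_natCast (min n i)]
    congr 1
    push_cast
    rfl
  -- Step 1
  have hstep1 : Summable (fun n => a n * (n:ℝ)^k * w n) ↔ (∑' m, dd m * T1 (m+1)) ≠ ⊤ := by
    rw [aux_summable_iff_ofReal (fun n => mul_nonneg (hα0 n) (hw0 n))]
    have e1 : ∀ n : ℕ, ENNReal.ofReal (a n * (n:ℝ)^k * w n) = α n * ENNReal.ofReal (w n) :=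
      fun n => ENNReal.ofReal_mul (hα0 n)
    rw [tsum_congr e1]
    have hid : ∑' n : ℕ, α n * ENNReal.ofReal (w n - w 0) = ∑' m, dd m * T1 (m+1) := by
      calc ∑' n : ℕ, α n * ENNReal.ofReal (w n - w 0)
          = ∑' n : ℕ, α n * ∑' m : ℕ, ((min n (m+1) : ℕ) : ℝ≥0∞) * dd m := by
            apply tsum_congr; intro n
            rw [aux_w_repr w hwmono hwdec hwlim n]
        _ = ∑' n : ℕ, ∑' m : ℕ, α n * (((min n (m+1) : ℕ) : ℝ≥0∞) * dd m) := by
            apply tsum_congr; intro n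
            rw [ENNReal.tsum_mul_left]
        _ = ∑' m : ℕ, ∑' n : ℕ, α n * (((min n (m+1) : ℕ) : ℝ≥0∞) * dd m) := ENNReal.tsum_comm
        _ = ∑' m : ℕ, dd m * T1 (m+1) := by
            apply tsum_congr; intro m
            rw [hT1def, ← ENNReal.tsum_mul_left]
            apply tsum_congr; intro n
            rw [hcast n (m+1)]
            ring
    rw [← hid]
    constructor
    · intro h
      apply ne_top_of_le_ne_top h
      apply ENNReal.tsum_le_tsum
      intro n
      exact mul_le_mul_right (ENNReal.ofReal_le_ofReal (by linarith [hw0 0])) _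
    · intro h
      have hA_le : ∑' n : ℕ, α n * ENNReal.ofReal (w n)
          ≤ (∑' n : ℕ, α n * ENNReal.ofReal (w n - w 0)) + ENNReal.ofReal (w 0) * ∑' n, α n := by
        calc ∑' n : ℕ, α n * ENNReal.ofReal (w n)
            ≤ ∑' n : ℕ, (α n * ENNReal.ofReal (w n - w 0) + α n * ENNReal.ofReal (w 0)) := by
              apply ENNReal.tsum_le_tsum
              intro n
              have h1 : ENNReal.ofReal (w n)
                  ≤ ENNReal.ofReal (w n - w 0) + ENNReal.ofReal (w 0) := by
                conv_lhs => rw [show w n = (w n - w 0) + w 0 by ring]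
                exact ENNReal.ofReal_add_le
              calc α n * ENNReal.ofReal (w n)
                  ≤ α n * (ENNReal.ofReal (w n - w 0) + ENNReal.ofReal (w 0)) :=
                    mul_le_mul_right h1 _
                _ = α n * ENNReal.ofReal (w n - w 0) + α n * ENNReal.ofReal (w 0) :=
                    mul_add _ _ _
          _ = (∑' n : ℕ, α n * ENNReal.ofReal (w n - w 0))
              + ∑' n : ℕ, α n * ENNReal.ofReal (w 0) := ENNReal.tsum_add
          _ = (∑' n : ℕ, α n * ENNReal.ofReal (w n - w 0))
              + ENNReal.ofReal (w 0) * ∑' n, α n := by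
              rw [ENNReal.tsum_mul_right, mul_comm]
      apply ne_top_of_le_ne_top _ hA_le
      exact ENNReal.add_ne_top.2 ⟨h, ENNReal.mul_ne_top ENNReal.ofReal_ne_top hSα⟩
  -- Step 2 : comparison between T1 and T2
  set K1 : ℝ≥0∞ := ENNReal.ofReal (max 1 (1/c)) with hK1def
  set K2 : ℝ≥0∞ := ENNReal.ofReal (2^k * max 1 (2*c)) with hK2def
  set C0 : ℝ≥0∞ := ∑ n ∈ Finset.range (2*k+1), α n * ENNReal.ofReal (n:ℝ) with hC0def
  have hC0 : C0 ≠ ⊤ := by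
    rw [hC0def]
    apply (ENNReal.sum_lt_top.2 ?_).ne
    intro n _
    exact (ENNReal.mul_ne_top ENNReal.ofReal_ne_top ENNReal.ofReal_ne_top).lt_top
  have hT21 : ∀ i : ℕ, T2 i ≤ K1 * T1 i := by
    intro i
    rw [hT1def, hT2def, ← ENNReal.tsum_mul_left]
    apply ENNReal.tsum_le_tsum
    intro m
    have hreal : min (i:ℝ) (((m - k : ℕ):ℝ) / c) ≤ max 1 (1/c) * min (m:ℝ) (i:ℝ) := by
      rw [min_comm (i:ℝ) (((m - k : ℕ):ℝ) / c), min_comm (m:ℝ) (i:ℝ)]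
      apply aux_min_le (le_max_left _ _) (Nat.cast_nonneg i)
      have h1 : ((m - k : ℕ):ℝ) ≤ (m:ℝ) := by exact_mod_cast Nat.sub_le m k
      calc ((m - k : ℕ):ℝ) / c ≤ (m:ℝ) / c := by gcongr
        _ = (1/c) * (m:ℝ) := by ring
        _ ≤ max 1 (1/c) * (m:ℝ) :=
            mul_le_mul_of_nonneg_right (le_max_right _ _) (Nat.cast_nonneg m)
    calc β m * ENNReal.ofReal (min (i:ℝ) (((m - k : ℕ):ℝ) / c))
        ≤ α m * ENNReal.ofReal (max 1 (1/c) * min (m:ℝ) (i:ℝ)) :=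
          mul_le_mul' (hβα m) (ENNReal.ofReal_le_ofReal hreal)
      _ = α m * (K1 * ENNReal.ofReal (min (m:ℝ) (i:ℝ))) := by
          rw [hK1def, ENNReal.ofReal_mul (le_trans zero_le_one (le_max_left _ _))]
      _ = K1 * (α m * ENNReal.ofReal (min (m:ℝ) (i:ℝ))) := by ring
  have hT12 : ∀ i : ℕ, T1 i ≤ K2 * T2 i + C0 := by
    intro i
    have hsplit := Summable.sum_add_tsum_nat_add'
      (f := fun n => α n * ENNReal.ofReal (min (n:ℝ) (i:ℝ))) (k := 2*k+1) ENNReal.summable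
    show (∑' n : ℕ, α n * ENNReal.ofReal (min (n:ℝ) (i:ℝ))) ≤ K2 * T2 i + C0
    calc (∑' n : ℕ, α n * ENNReal.ofReal (min (n:ℝ) (i:ℝ)))
        = (∑ n ∈ Finset.range (2*k+1), α n * ENNReal.ofReal (min (n:ℝ) (i:ℝ)))
          + ∑' n : ℕ, α (n + (2*k+1)) * ENNReal.ofReal (min ((n + (2*k+1) : ℕ):ℝ) (i:ℝ)) :=
          hsplit.symm
      _ ≤ C0 + K2 * T2 i := by
          apply add_le_add
          · rw [hC0def]
            apply Finset.sum_le_sum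
            intro n _
            exact mul_le_mul_right (ENNReal.ofReal_le_ofReal (min_le_left _ _)) _
          · calc ∑' n : ℕ, α (n + (2*k+1)) * ENNReal.ofReal (min ((n + (2*k+1) : ℕ):ℝ) (i:ℝ))
                ≤ ∑' n : ℕ, K2 * (β (n + (2*k+1)) *
                    ENNReal.ofReal (min (i:ℝ) ((((n + (2*k+1)) - k : ℕ):ℝ) / c))) := by
                  apply ENNReal.tsum_le_tsum
                  intro n
                  set m := n + (2*k+1) with hmdef
                  have hrm := aux_main_ineq hc (i:ℝ) (Nat.cast_nonneg i) m k (by omega) (ha m)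
                  have hK2r : (0:ℝ) ≤ 2^k * max 1 (2*c) := by positivity
                  calc α m * ENNReal.ofReal (min (m:ℝ) (i:ℝ))
                      = ENNReal.ofReal (a m * (m:ℝ)^k * min (m:ℝ) (i:ℝ)) := by
                        rw [ENNReal.ofReal_mul (hα0 m)]
                    _ ≤ ENNReal.ofReal ((2^k * max 1 (2*c)) *
                          ((m.descFactorial k : ℝ) * a m * min (i:ℝ) (((m - k : ℕ):ℝ) / c))) :=
                        ENNReal.ofReal_le_ofReal hrm
                    _ = K2 * (β m * ENNReal.ofReal (min (i:ℝ) (((m - k : ℕ):ℝ) / c))) := by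
                        rw [hK2def, ENNReal.ofReal_mul hK2r, ENNReal.ofReal_mul (hb0 m)]
              _ = K2 * ∑' n : ℕ, β (n + (2*k+1)) *
                    ENNReal.ofReal (min (i:ℝ) ((((n + (2*k+1)) - k : ℕ):ℝ) / c)) :=
                  ENNReal.tsum_mul_left
              _ ≤ K2 * T2 i := by
                  apply mul_le_mul_right
                  show _ ≤ (∑' m : ℕ, β m * ENNReal.ofReal (min (i:ℝ) (((m - k : ℕ):ℝ) / c)))
                  have hsplit2 := Summable.sum_add_tsum_nat_add'
                    (f := fun m => β m * ENNReal.ofReal (min (i:ℝ) (((m - k : ℕ):ℝ) / c)))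
                    (k := 2*k+1) ENNReal.summable
                  calc ∑' n : ℕ, β (n + (2*k+1)) *
                        ENNReal.ofReal (min (i:ℝ) ((((n + (2*k+1)) - k : ℕ):ℝ) / c))
                      ≤ (∑ m ∈ Finset.range (2*k+1),
                          β m * ENNReal.ofReal (min (i:ℝ) (((m - k : ℕ):ℝ) / c)))
                        + ∑' n : ℕ, β (n + (2*k+1)) *
                          ENNReal.ofReal (min (i:ℝ) ((((n + (2*k+1)) - k : ℕ):ℝ) / c)) :=
                        le_add_self
                    _ = _ := hsplit2
      _ = K2 * T2 i + C0 := add_comm _ _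
  have hstep2 : (∑' m, dd m * T1 (m+1)) ≠ ⊤ ↔ (∑' m, dd m * T2 (m+1)) ≠ ⊤ := by
    constructor
    · intro h
      have hle : (∑' m, dd m * T2 (m+1)) ≤ K1 * ∑' m, dd m * T1 (m+1) := by
        rw [← ENNReal.tsum_mul_left]
        apply ENNReal.tsum_le_tsum
        intro m
        calc dd m * T2 (m+1) ≤ dd m * (K1 * T1 (m+1)) := mul_le_mul_right (hT21 (m+1)) _
          _ = K1 * (dd m * T1 (m+1)) := by ring
      exact ne_top_of_le_ne_top (ENNReal.mul_ne_top ENNReal.ofReal_ne_top h) hle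
    · intro h
      have hle : (∑' m, dd m * T1 (m+1))
          ≤ K2 * (∑' m, dd m * T2 (m+1)) + C0 * ∑' m, dd m := by
        calc (∑' m, dd m * T1 (m+1))
            ≤ ∑' m, (K2 * (dd m * T2 (m+1)) + C0 * dd m) := by
              apply ENNReal.tsum_le_tsum
              intro m
              calc dd m * T1 (m+1) ≤ dd m * (K2 * T2 (m+1) + C0) :=
                    mul_le_mul_right (hT12 (m+1)) _
                _ = K2 * (dd m * T2 (m+1)) + C0 * dd m := by ring
          _ = (∑' m, K2 * (dd m * T2 (m+1))) + ∑' m, C0 * dd m := ENNReal.tsum_add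
          _ = K2 * (∑' m, dd m * T2 (m+1)) + C0 * ∑' m, dd m := by
              rw [ENNReal.tsum_mul_left, ENNReal.tsum_mul_left]
      apply ne_top_of_le_ne_top _ hle
      exact ENNReal.add_ne_top.2
        ⟨ENNReal.mul_ne_top ENNReal.ofReal_ne_top h, ENNReal.mul_ne_top hC0 hSd⟩
  -- Step 3 : discard the first N terms
  set N : ℕ := Nat.ceil (1/c) with hNdef
  have hheadN : ∀ m : ℕ, dd m * T2 (m+1) ≠ ⊤ :=
    fun m => ENNReal.mul_ne_top ENNReal.ofReal_ne_top (hT2fin (m+1))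
  have hstep3 : (∑' m, dd m * T2 (m+1)) ≠ ⊤ ↔ (∑' m, dd (m+N) * T2 (m+N+1)) ≠ ⊤ := by
    have hsplitN := Summable.sum_add_tsum_nat_add'
      (f := fun m => dd m * T2 (m+1)) (k := N) ENNReal.summable
    rw [← hsplitN, ENNReal.add_ne_top]
    have hhead : (∑ m ∈ Finset.range N, dd m * T2 (m+1)) ≠ ⊤ := by
      apply (ENNReal.sum_lt_top.2 ?_).ne
      intro m _
      exact (hheadN m).lt_top
    exact ⟨fun h => h.2, fun h => ⟨hhead, h⟩⟩
  -- Step 4 : identification with the series in the statement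
  have hstep4 : (∑' m, dd (m+N) * T2 (m+N+1)) ≠ ⊤ ↔
      (∑' n : ℕ, ENNReal.ofReal (((↑(n+N):ℝ) + 1) *
        ((w (n+N+1) - w (n+N)) - (w (n+N+2) - w (n+N+1))) *
        ((∑' m : ℕ, (m.descFactorial k : ℝ) * a m * (1 : ℝ) ^ (m - k)) -
          ∑' m : ℕ, (m.descFactorial k : ℝ) * a m *
            (1 - 1 / (c * ((↑(n+N):ℝ) + 1))) ^ (m - k)))) ≠ ⊤ := by
    have hterm : ∀ n : ℕ,
        ENNReal.ofReal (((↑(n+N):ℝ) + 1) *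
          ((w (n+N+1) - w (n+N)) - (w (n+N+2) - w (n+N+1))) *
          ((∑' m : ℕ, (m.descFactorial k : ℝ) * a m * (1 : ℝ) ^ (m - k)) -
            ∑' m : ℕ, (m.descFactorial k : ℝ) * a m *
              (1 - 1 / (c * ((↑(n+N):ℝ) + 1))) ^ (m - k)))
          ≤ dd (n+N) * T2 (n+N+1) ∧
        dd (n+N) * T2 (n+N+1) ≤ ENNReal.ofReal 2 *
          ENNReal.ofReal (((↑(n+N):ℝ) + 1) *
            ((w (n+N+1) - w (n+N)) - (w (n+N+2) - w (n+N+1))) *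
            ((∑' m : ℕ, (m.descFactorial k : ℝ) * a m * (1 : ℝ) ^ (m - k)) -
              ∑' m : ℕ, (m.descFactorial k : ℝ) * a m *
                (1 - 1 / (c * ((↑(n+N):ℝ) + 1))) ^ (m - k))) := by
      intro n
      set x : ℝ := ((n+N : ℕ):ℝ) + 1 with hxdef
      have hx0 : (0:ℝ) ≤ x := by rw [hxdef]; positivity
      have hx1 : 1 ≤ c * x := by
        have h1 : 1/c ≤ (N:ℝ) := by rw [hNdef]; exact Nat.le_ceil _
        have h2 : (N:ℝ) ≤ x := by
          rw [hxdef]; push_cast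
          have : (0:ℝ) ≤ (n:ℝ) := Nat.cast_nonneg n
          linarith
        have h3 : 1/c ≤ x := le_trans h1 h2
        calc (1:ℝ) = c * (1/c) := by field_simp
          _ ≤ c * x := mul_le_mul_of_nonneg_left h3 (le_of_lt hc)
      have hcx0 : (0:ℝ) < c * x := lt_of_lt_of_le one_pos hx1
      have ht0 : 0 ≤ 1 - 1/(c*x) := by
        have : 1/(c*x) ≤ 1 := by rw [div_le_one hcx0]; linarith
        linarith
      have ht1 : 1 - 1/(c*x) ≤ 1 := by
        have : 0 ≤ 1/(c*x) := by positivity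
        linarith
      have hdiff := aux_diff a ha k hk ht0 ht1 hx0
      have hofG : ENNReal.ofReal (x *
            ((w (n+N+1) - w (n+N)) - (w (n+N+2) - w (n+N+1))) *
            ((∑' m : ℕ, (m.descFactorial k : ℝ) * a m * (1 : ℝ) ^ (m - k)) -
              ∑' m : ℕ, (m.descFactorial k : ℝ) * a m * (1 - 1/(c*x)) ^ (m - k)))
          = dd (n+N) * ∑' m : ℕ, β m * ENNReal.ofReal (x * (1 - (1 - 1/(c*x)) ^ (m - k))) := by
        rw [show x * ((w (n+N+1) - w (n+N)) - (w (n+N+2) - w (n+N+1))) *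
            ((∑' m : ℕ, (m.descFactorial k : ℝ) * a m * (1 : ℝ) ^ (m - k)) -
              ∑' m : ℕ, (m.descFactorial k : ℝ) * a m * (1 - 1/(c*x)) ^ (m - k))
          = ((w (n+N+1) - w (n+N)) - (w (n+N+2) - w (n+N+1))) *
            (x * ((∑' m : ℕ, (m.descFactorial k : ℝ) * a m * (1 : ℝ) ^ (m - k)) -
              ∑' m : ℕ, (m.descFactorial k : ℝ) * a m * (1 - 1/(c*x)) ^ (m - k))) from by ring]
        rw [ENNReal.ofReal_mul (hd0 (n+N)), hdiff]
      have hxcast : ((n+N+1 : ℕ):ℝ) = x := by rw [hxdef]; push_cast; ring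
      have hub : (∑' m : ℕ, β m * ENNReal.ofReal (x * (1 - (1 - 1/(c*x)) ^ (m - k))))
          ≤ T2 (n+N+1) := by
        show _ ≤ ∑' m : ℕ, β m *
          ENNReal.ofReal (min (((n+N+1 : ℕ)):ℝ) (((m - k : ℕ):ℝ) / c))
        apply ENNReal.tsum_le_tsum
        intro m
        apply mul_le_mul_right
        apply ENNReal.ofReal_le_ofReal
        rw [hxcast]
        exact (aux_key hc x hx1 (m-k)).1
      have hlb : T2 (n+N+1) ≤ ENNReal.ofReal 2 *
          ∑' m : ℕ, β m * ENNReal.ofReal (x * (1 - (1 - 1/(c*x)) ^ (m - k))) := by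
        rw [← ENNReal.tsum_mul_left]
        show (∑' m : ℕ, β m *
          ENNReal.ofReal (min (((n+N+1 : ℕ)):ℝ) (((m - k : ℕ):ℝ) / c))) ≤ _
        apply ENNReal.tsum_le_tsum
        intro m
        have hr := (aux_key hc x hx1 (m-k)).2
        calc β m * ENNReal.ofReal (min (((n+N+1 : ℕ)):ℝ) (((m - k : ℕ):ℝ) / c))
            ≤ β m * ENNReal.ofReal (2 * (x * (1 - (1 - 1/(c*x)) ^ (m - k)))) := by
              apply mul_le_mul_right
              apply ENNReal.ofReal_le_ofReal
              rw [hxcast]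
              linarith
          _ = ENNReal.ofReal 2 * (β m * ENNReal.ofReal (x * (1 - (1 - 1/(c*x)) ^ (m - k)))) := by
              rw [ENNReal.ofReal_mul (by norm_num : (0:ℝ) ≤ 2)]
              ring
      constructor
      · rw [hofG]
        exact mul_le_mul_right hub _
      · rw [hofG]
        calc dd (n+N) * T2 (n+N+1)
            ≤ dd (n+N) * (ENNReal.ofReal 2 *
              ∑' m : ℕ, β m * ENNReal.ofReal (x * (1 - (1 - 1/(c*x)) ^ (m - k)))) :=
              mul_le_mul_right hlb _
          _ = ENNReal.ofReal 2 * (dd (n+N) *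
              ∑' m : ℕ, β m * ENNReal.ofReal (x * (1 - (1 - 1/(c*x)) ^ (m - k)))) := by ring
    constructor
    · intro h
      exact ne_top_of_le_ne_top h (ENNReal.tsum_le_tsum (fun n => (hterm n).1))
    · intro h
      apply ne_top_of_le_ne_top
        (ENNReal.mul_ne_top (ENNReal.ofReal_ne_top (r := 2)) h)
      calc (∑' m, dd (m+N) * T2 (m+N+1))
          ≤ ∑' n : ℕ, ENNReal.ofReal 2 * ENNReal.ofReal (((↑(n+N):ℝ) + 1) *
              ((w (n+N+1) - w (n+N)) - (w (n+N+2) - w (n+N+1))) *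
              ((∑' m : ℕ, (m.descFactorial k : ℝ) * a m * (1 : ℝ) ^ (m - k)) -
                ∑' m : ℕ, (m.descFactorial k : ℝ) * a m *
                  (1 - 1 / (c * ((↑(n+N):ℝ) + 1))) ^ (m - k))) :=
            ENNReal.tsum_le_tsum (fun n => (hterm n).2)
        _ = _ := ENNReal.tsum_mul_left
  -- Step 5/6 : back to real summability
  have hA1At : ∀ {t : ℝ}, 0 ≤ t → t ≤ 1 →
      0 ≤ (∑' m : ℕ, (m.descFactorial k : ℝ) * a m * (1 : ℝ) ^ (m - k)) -
        ∑' m : ℕ, (m.descFactorial k : ℝ) * a m * t ^ (m - k) := by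
    intro t ht0 ht1
    apply sub_nonneg.2
    apply Summable.tsum_le_tsum _ (aux_At_summable a ha k hk ht0 ht1)
      (aux_At_summable a ha k hk zero_le_one le_rfl)
    intro m
    apply mul_le_mul_of_nonneg_left _ (hb0 m)
    rw [one_pow]
    exact pow_le_one₀ ht0 ht1
  have hx1' : ∀ n : ℕ, 1 ≤ c * ((↑(n+N):ℝ) + 1) := by
    intro n
    have h1 : 1/c ≤ (N:ℝ) := by rw [hNdef]; exact Nat.le_ceil _
    have h2 : (N:ℝ) ≤ ((n+N:ℕ):ℝ) + 1 := by
      push_cast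
      have : (0:ℝ) ≤ (n:ℝ) := Nat.cast_nonneg n
      linarith
    have h3 : 1/c ≤ ((n+N:ℕ):ℝ) + 1 := le_trans h1 h2
    calc (1:ℝ) = c * (1/c) := by field_simp
      _ ≤ c * (((n+N:ℕ):ℝ) + 1) := mul_le_mul_of_nonneg_left h3 (le_of_lt hc)
  have hGnn : ∀ n : ℕ, 0 ≤ ((↑(n+N):ℝ) + 1) *
      ((w (n+N+1) - w (n+N)) - (w (n+N+2) - w (n+N+1))) *
      ((∑' m : ℕ, (m.descFactorial k : ℝ) * a m * (1 : ℝ) ^ (m - k)) -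
        ∑' m : ℕ, (m.descFactorial k : ℝ) * a m *
          (1 - 1 / (c * ((↑(n+N):ℝ) + 1))) ^ (m - k)) := by
    intro n
    have hx1 := hx1' n
    have hcx0 : (0:ℝ) < c * ((↑(n+N):ℝ) + 1) := lt_of_lt_of_le one_pos hx1
    have ht0 : 0 ≤ 1 - 1/(c * ((↑(n+N):ℝ) + 1)) := by
      have : 1/(c * ((↑(n+N):ℝ) + 1)) ≤ 1 := by rw [div_le_one hcx0]; linarith
      linarith
    have ht1 : 1 - 1/(c * ((↑(n+N):ℝ) + 1)) ≤ 1 := by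
      have : 0 ≤ 1/(c * ((↑(n+N):ℝ) + 1)) := by positivity
      linarith
    apply mul_nonneg (mul_nonneg (by positivity) (hd0 (n+N))) (hA1At ht0 ht1)
  have hstep5 : (∑' n : ℕ, ENNReal.ofReal (((↑(n+N):ℝ) + 1) *
        ((w (n+N+1) - w (n+N)) - (w (n+N+2) - w (n+N+1))) *
        ((∑' m : ℕ, (m.descFactorial k : ℝ) * a m * (1 : ℝ) ^ (m - k)) -
          ∑' m : ℕ, (m.descFactorial k : ℝ) * a m *
            (1 - 1 / (c * ((↑(n+N):ℝ) + 1))) ^ (m - k)))) ≠ ⊤ ↔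
      Summable (fun n : ℕ => ((↑(n+N):ℝ) + 1) *
        ((w (n+N+1) - w (n+N)) - (w (n+N+2) - w (n+N+1))) *
        ((∑' m : ℕ, (m.descFactorial k : ℝ) * a m * (1 : ℝ) ^ (m - k)) -
          ∑' m : ℕ, (m.descFactorial k : ℝ) * a m *
            (1 - 1 / (c * ((↑(n+N):ℝ) + 1))) ^ (m - k))) :=
    (aux_summable_iff_ofReal hGnn).symm
  have hstep6 : Summable (fun n : ℕ => ((↑(n+N):ℝ) + 1) *
        ((w (n+N+1) - w (n+N)) - (w (n+N+2) - w (n+N+1))) *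
        ((∑' m : ℕ, (m.descFactorial k : ℝ) * a m * (1 : ℝ) ^ (m - k)) -
          ∑' m : ℕ, (m.descFactorial k : ℝ) * a m *
            (1 - 1 / (c * ((↑(n+N):ℝ) + 1))) ^ (m - k))) ↔
      Summable (fun n : ℕ =>
        ((n : ℝ) + 1) * ((w (n + 1) - w n) - (w (n + 2) - w (n + 1))) *
          ((∑' m : ℕ, (m.descFactorial k : ℝ) * a m * (1 : ℝ) ^ (m - k)) -
            ∑' m : ℕ, (m.descFactorial k : ℝ) * a m *
              (1 - 1 / (c * ((n : ℝ) + 1))) ^ (m - k))) :=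
    summable_nat_add_iff (f := fun n : ℕ =>
        ((n : ℝ) + 1) * ((w (n + 1) - w n) - (w (n + 2) - w (n + 1))) *
          ((∑' m : ℕ, (m.descFactorial k : ℝ) * a m * (1 : ℝ) ^ (m - k)) -
            ∑' m : ℕ, (m.descFactorial k : ℝ) * a m *
              (1 - 1 / (c * ((n : ℝ) + 1))) ^ (m - k))) N
  exact hstep1.trans (hstep2.trans (hstep3.trans (hstep4.trans (hstep5.trans hstep6))))
end

section
/- Let (f_n)_{n≥1} be nonnegative reals, let R > 0 with F(R) = ∑_{n≥1} f_n R^n < 1, and let (u_n)_{n≥0} be the associated renewal sequence. Then U(R) = ∑_{n≥0} u_n R^n = 1/(1 − F(R)) < ∞, and for every integer k ≥ 1: ∑_{n≥1} f_n n^k R^n < ∞ if and only if ∑_{n≥0} u_n n^k R^n < ∞. -/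
open Finset

private lemma renewal_swap_bound (c d : ℕ → ℝ) (hc : ∀ n, 0 ≤ c n) (hd : ∀ n, 0 ≤ d n) (N : ℕ) :
    ∑ n ∈ Icc 1 N, ∑ i ∈ Icc 1 n, c i * d (n - i)
      ≤ (∑ i ∈ Icc 1 N, c i) * ∑ m ∈ range (N + 1), d m := by
  have hswap : ∑ n ∈ Icc 1 N, ∑ i ∈ Icc 1 n, c i * d (n - i)
      = ∑ i ∈ Icc 1 N, ∑ n ∈ Icc i N, c i * d (n - i) :=
    Finset.sum_comm' (fun n i => by simp only [mem_Icc]; omega)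
  rw [hswap, Finset.sum_mul]
  refine Finset.sum_le_sum fun i _ => ?_
  have h1 : ∑ n ∈ Icc i N, c i * d (n - i) = c i * ∑ m ∈ range (N + 1 - i), d m := by
    rw [Finset.mul_sum, ← Finset.Ico_add_one_right_eq_Icc, Finset.sum_Ico_eq_sum_range]
    exact Finset.sum_congr rfl fun j _ => by rw [Nat.add_sub_cancel_left]
  rw [h1]
  refine mul_le_mul_of_nonneg_left ?_ (hc i)
  refine Finset.sum_le_sum_of_subset_of_nonneg (Finset.range_subset_range.mpr (by omega))
    fun m _ _ => hd m

section renewal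

variable {a b : ℕ → ℝ}

private lemma renewal_b_nonneg (ha : ∀ n, 0 ≤ a n) (hb0 : b 0 = 1)
    (hbn : ∀ n, 1 ≤ n → b n = ∑ i ∈ Icc 1 n, a i * b (n - i)) : ∀ n, 0 ≤ b n := by
  intro n
  induction n using Nat.strong_induction_on with
  | _ n ih =>
    rcases Nat.eq_zero_or_pos n with h | h
    · simp [h, hb0]
    · rw [hbn n h]
      refine Finset.sum_nonneg fun i hi => ?_
      simp only [mem_Icc] at hi
      exact mul_nonneg (ha i) (ih (n - i) (by omega))

private lemma renewal_binom (hbn : ∀ n, 1 ≤ n → b n = ∑ i ∈ Icc 1 n, a i * b (n - i))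
    (k n : ℕ) (hn : 1 ≤ n) :
    b n * (n : ℝ) ^ k = ∑ j ∈ range (k + 1), (k.choose j : ℝ) *
      ∑ i ∈ Icc 1 n, (a i * (i : ℝ) ^ j) * (b (n - i) * ((n - i : ℕ) : ℝ) ^ (k - j)) := by
  rw [hbn n hn, Finset.sum_mul]
  rw [show (∑ j ∈ range (k + 1), (k.choose j : ℝ) *
      ∑ i ∈ Icc 1 n, (a i * (i : ℝ) ^ j) * (b (n - i) * ((n - i : ℕ) : ℝ) ^ (k - j)))
      = ∑ i ∈ Icc 1 n, ∑ j ∈ range (k + 1),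
        (k.choose j : ℝ) * ((a i * (i : ℝ) ^ j) * (b (n - i) * ((n - i : ℕ) : ℝ) ^ (k - j))) by
    simp_rw [Finset.mul_sum]; exact Finset.sum_comm]
  refine Finset.sum_congr rfl fun i hi => ?_
  simp only [mem_Icc] at hi
  have hcast : (i : ℝ) + ((n - i : ℕ) : ℝ) = (n : ℝ) := by
    rw [← Nat.cast_add]; congr 1; omega
  calc a i * b (n - i) * (n : ℝ) ^ k
      = a i * b (n - i) * ((i : ℝ) + ((n - i : ℕ) : ℝ)) ^ k := by rw [hcast]
    _ = ∑ j ∈ range (k + 1),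
        (k.choose j : ℝ) * ((a i * (i : ℝ) ^ j) * (b (n - i) * ((n - i : ℕ) : ℝ) ^ (k - j))) := by
        rw [add_pow, Finset.mul_sum]
        exact Finset.sum_congr rfl fun j _ => by ring

private lemma renewal_key (ha : ∀ n, 0 ≤ a n) (hbnn : ∀ n, 0 ≤ b n) (hb0 : b 0 = 1)
    (hbn : ∀ n, 1 ≤ n → b n = ∑ i ∈ Icc 1 n, a i * b (n - i))
    (hA : Summable a) (hA1 : ∑' n, a n < 1) (k : ℕ)
    (hAj : ∀ j, j ≤ k → Summable (fun n => a n * (n : ℝ) ^ j))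
    (hBm : ∀ m, m < k → Summable (fun n => b n * (n : ℝ) ^ m)) :
    Summable (fun n => b n * (n : ℝ) ^ k) := by
  have hA0 : 0 ≤ ∑' n, a n := tsum_nonneg ha
  have h1A : 0 < 1 - ∑' n, a n := by linarith
  have hDnn : 0 ≤ ∑ j ∈ range k, (k.choose (j + 1) : ℝ) *
      ((∑' n, a n * (n : ℝ) ^ (j + 1)) * (∑' n, b n * (n : ℝ) ^ (k - (j + 1)))) := by
    refine Finset.sum_nonneg fun j _ => ?_
    refine mul_nonneg (by positivity) (mul_nonneg ?_ ?_)
    · exact tsum_nonneg fun n => mul_nonneg (ha n) (by positivity)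
    · exact tsum_nonneg fun n => mul_nonneg (hbnn n) (by positivity)
  have hterm : ∀ n, 0 ≤ b n * (n : ℝ) ^ k := fun n => mul_nonneg (hbnn n) (by positivity)
  have hT : ∀ N : ℕ, ∑ n ∈ range (N + 1), b n * (n : ℝ) ^ k
      ≤ (1 + ∑ j ∈ range k, (k.choose (j + 1) : ℝ) *
          ((∑' n, a n * (n : ℝ) ^ (j + 1)) * (∑' n, b n * (n : ℝ) ^ (k - (j + 1)))))
        / (1 - ∑' n, a n) := by
    intro N
    have hTnn : 0 ≤ ∑ n ∈ range (N + 1), b n * (n : ℝ) ^ k :=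
      Finset.sum_nonneg fun n _ => hterm n
    have hsplit : ∑ n ∈ range (N + 1), b n * (n : ℝ) ^ k
        = b 0 * ((0 : ℕ) : ℝ) ^ k + ∑ n ∈ Icc 1 N, b n * (n : ℝ) ^ k := by
      rw [Finset.range_eq_Ico, Finset.sum_eq_sum_Ico_succ_bot (Nat.succ_pos N),
        Nat.succ_eq_add_one, Finset.Ico_add_one_right_eq_Icc]
    have hb00 : b 0 * ((0 : ℕ) : ℝ) ^ k ≤ 1 := by
      rcases Nat.eq_zero_or_pos k with hk | hk
      · simp [hk, hb0]
      · norm_num [zero_pow (by omega : k ≠ 0)]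
    -- bound the Icc part
    have hIcc : ∑ n ∈ Icc 1 N, b n * (n : ℝ) ^ k
        ≤ (∑' n, a n) * (∑ n ∈ range (N + 1), b n * (n : ℝ) ^ k)
          + ∑ j ∈ range k, (k.choose (j + 1) : ℝ) *
            ((∑' n, a n * (n : ℝ) ^ (j + 1)) * (∑' n, b n * (n : ℝ) ^ (k - (j + 1)))) := by
      have hexp : ∑ n ∈ Icc 1 N, b n * (n : ℝ) ^ k
          = ∑ j ∈ range (k + 1), (k.choose j : ℝ) *
            ∑ n ∈ Icc 1 N, ∑ i ∈ Icc 1 n,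
              (a i * (i : ℝ) ^ j) * (b (n - i) * ((n - i : ℕ) : ℝ) ^ (k - j)) := by
        rw [show (∑ n ∈ Icc 1 N, b n * (n : ℝ) ^ k)
            = ∑ n ∈ Icc 1 N, ∑ j ∈ range (k + 1), (k.choose j : ℝ) *
              ∑ i ∈ Icc 1 n, (a i * (i : ℝ) ^ j) * (b (n - i) * ((n - i : ℕ) : ℝ) ^ (k - j)) from
          Finset.sum_congr rfl fun n hn =>
            renewal_binom hbn k n (by simp only [mem_Icc] at hn; omega)]
        rw [Finset.sum_comm]
        exact Finset.sum_congr rfl fun j _ => by rw [Finset.mul_sum]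
      rw [hexp, Finset.sum_range_succ']
      have hj0 : (k.choose 0 : ℝ) *
          ∑ n ∈ Icc 1 N, ∑ i ∈ Icc 1 n,
            (a i * (i : ℝ) ^ 0) * (b (n - i) * ((n - i : ℕ) : ℝ) ^ (k - 0))
          ≤ (∑' n, a n) * (∑ n ∈ range (N + 1), b n * (n : ℝ) ^ k) := by
        simp only [Nat.choose_zero_right, Nat.cast_one, one_mul, pow_zero, mul_one, Nat.sub_zero]
        calc ∑ n ∈ Icc 1 N, ∑ i ∈ Icc 1 n, a i * (b (n - i) * ((n - i : ℕ) : ℝ) ^ k)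
            ≤ (∑ i ∈ Icc 1 N, a i) * ∑ m ∈ range (N + 1), b m * (m : ℝ) ^ k :=
              renewal_swap_bound a (fun m => b m * (m : ℝ) ^ k) ha hterm N
          _ ≤ (∑' n, a n) * (∑ n ∈ range (N + 1), b n * (n : ℝ) ^ k) :=
              mul_le_mul_of_nonneg_right (Summable.sum_le_tsum _ (fun i _ => ha i) hA) hTnn
      have hjpos : ∑ j ∈ range k, (k.choose (j + 1) : ℝ) *
          ∑ n ∈ Icc 1 N, ∑ i ∈ Icc 1 n,
            (a i * (i : ℝ) ^ (j + 1)) * (b (n - i) * ((n - i : ℕ) : ℝ) ^ (k - (j + 1)))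
          ≤ ∑ j ∈ range k, (k.choose (j + 1) : ℝ) *
            ((∑' n, a n * (n : ℝ) ^ (j + 1)) * (∑' n, b n * (n : ℝ) ^ (k - (j + 1)))) := by
        refine Finset.sum_le_sum fun j hj => ?_
        simp only [mem_range] at hj
        refine mul_le_mul_of_nonneg_left ?_ (by positivity)
        have hAj' := hAj (j + 1) (by omega)
        have hBm' := hBm (k - (j + 1)) (by omega)
        have hs1 : ∑ i ∈ Icc 1 N, a i * (i : ℝ) ^ (j + 1)
            ≤ ∑' n, a n * (n : ℝ) ^ (j + 1) :=
          Summable.sum_le_tsum _ (fun i _ => mul_nonneg (ha i) (by positivity)) hAj'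
        have hs2 : ∑ m ∈ range (N + 1), b m * (m : ℝ) ^ (k - (j + 1))
            ≤ ∑' n, b n * (n : ℝ) ^ (k - (j + 1)) :=
          Summable.sum_le_tsum _ (fun i _ => mul_nonneg (hbnn i) (by positivity)) hBm'
        calc ∑ n ∈ Icc 1 N, ∑ i ∈ Icc 1 n,
              (a i * (i : ℝ) ^ (j + 1)) * (b (n - i) * ((n - i : ℕ) : ℝ) ^ (k - (j + 1)))
            ≤ (∑ i ∈ Icc 1 N, a i * (i : ℝ) ^ (j + 1)) *
              ∑ m ∈ range (N + 1), b m * (m : ℝ) ^ (k - (j + 1)) :=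
              renewal_swap_bound (fun i => a i * (i : ℝ) ^ (j + 1))
                (fun m => b m * (m : ℝ) ^ (k - (j + 1)))
                (fun n => mul_nonneg (ha n) (by positivity))
                (fun n => mul_nonneg (hbnn n) (by positivity)) N
          _ ≤ (∑' n, a n * (n : ℝ) ^ (j + 1)) * (∑' n, b n * (n : ℝ) ^ (k - (j + 1))) :=
              mul_le_mul hs1 hs2
                (Finset.sum_nonneg fun i _ => mul_nonneg (hbnn i) (by positivity))
                (tsum_nonneg fun i => mul_nonneg (ha i) (by positivity))
      linarith
    rw [le_div_iff₀ h1A]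
    nlinarith [hsplit, hb00, hIcc, hTnn, hA0]
  refine summable_of_sum_range_le (c := (1 + ∑ j ∈ range k, (k.choose (j + 1) : ℝ) *
      ((∑' n, a n * (n : ℝ) ^ (j + 1)) * (∑' n, b n * (n : ℝ) ^ (k - (j + 1)))))
        / (1 - ∑' n, a n)) hterm fun N => ?_
  calc ∑ n ∈ range N, b n * (n : ℝ) ^ k ≤ ∑ n ∈ range (N + 1), b n * (n : ℝ) ^ k :=
      Finset.sum_le_sum_of_subset_of_nonneg (Finset.range_subset_range.mpr (by omega))
        fun m _ _ => hterm m
    _ ≤ _ := hT N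

end renewal

theorem stmt_2 (f : ℕ → ℝ) (hf : ∀ n, 0 ≤ f n) (hf0 : f 0 = 0)
    (R : ℝ) (hR : 0 < R)
    (hFs : Summable (fun n => f n * R ^ n)) (hFR : ∑' n, f n * R ^ n < 1)
    (u : ℕ → ℝ) (hu0 : u 0 = 1)
    (hun : ∀ n, 1 ≤ n → u n = ∑ k ∈ Finset.Icc 1 n, f k * u (n - k)) :
    (Summable (fun n => u n * R ^ n) ∧
      ∑' n, u n * R ^ n = 1 / (1 - ∑' n, f n * R ^ n)) ∧
    ∀ k : ℕ, 1 ≤ k →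
      (Summable (fun n => f n * (n : ℝ) ^ k * R ^ n) ↔
        Summable (fun n => u n * (n : ℝ) ^ k * R ^ n)) := by
  set a : ℕ → ℝ := fun n => f n * R ^ n with ha_def
  set b : ℕ → ℝ := fun n => u n * R ^ n with hb_def
  have ha : ∀ n, 0 ≤ a n := fun n => mul_nonneg (hf n) (by positivity)
  have ha0 : a 0 = 0 := by simp [ha_def, hf0]
  have hb0 : b 0 = 1 := by simp [hb_def, hu0]
  have hbn : ∀ n, 1 ≤ n → b n = ∑ i ∈ Icc 1 n, a i * b (n - i) := by
    intro n hn
    simp only [hb_def, ha_def]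
    rw [hun n hn, Finset.sum_mul]
    refine Finset.sum_congr rfl fun i hi => ?_
    simp only [mem_Icc] at hi
    have : R ^ n = R ^ i * R ^ (n - i) := by
      rw [← pow_add]; congr 1; omega
    rw [this]; ring
  have hbnn : ∀ n, 0 ≤ b n := renewal_b_nonneg ha hb0 hbn
  have hA1 : ∑' n, a n < 1 := hFR
  have hA : Summable a := hFs
  -- basic summability of b (k = 0 case of key lemma)
  have hBsum : Summable b := by
    have h0 := renewal_key ha hbnn hb0 hbn hA hA1 0
      (fun j hj => by
        simp only [Nat.le_zero] at hj; subst hj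
        simpa using hA)
      (fun m hm => absurd hm (Nat.not_lt_zero m))
    simpa using h0
  -- the tsum identity
  have hcauchy : (∑' n, a n) * ∑' n, b n = ∑' n, ∑ i ∈ range (n + 1), a i * b (n - i) := by
    refine tsum_mul_tsum_eq_tsum_sum_range_of_summable_norm ?_ ?_
    · simpa [Real.norm_eq_abs, abs_of_nonneg (ha _)] using hA
    · simpa [Real.norm_eq_abs, abs_of_nonneg (hbnn _)] using hBsum
  have hceq : ∀ n : ℕ, ∑ i ∈ range (n + 1), a i * b (n - i)
      = b n - if n = 0 then 1 else 0 := by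
    intro n
    rcases Nat.eq_zero_or_pos n with h | h
    · subst h; simp [ha0, hb0]
    · rw [if_neg (by omega), sub_zero, Finset.range_eq_Ico,
        Finset.sum_eq_sum_Ico_succ_bot (by omega), ha0, zero_mul, zero_add,
        Finset.Ico_add_one_right_eq_Icc, ← hbn n h]
  have hsum_e : Summable (fun n : ℕ => if n = 0 then (1 : ℝ) else 0) := by
    refine summable_of_ne_finset_zero (s := {0}) ?_
    intro n hn
    simp only [Finset.mem_singleton] at hn
    simp [hn]
  have htsum_e : ∑' n : ℕ, (if n = 0 then (1 : ℝ) else 0) = 1 := by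
    rw [tsum_eq_sum (s := {0}) (by intro n hn; simp only [Finset.mem_singleton] at hn; simp [hn])]
    simp
  have hBeq1 : (∑' n, a n) * ∑' n, b n = (∑' n, b n) - 1 := by
    rw [hcauchy]
    calc ∑' n, ∑ i ∈ range (n + 1), a i * b (n - i)
        = ∑' n, (b n - if n = 0 then 1 else 0) := tsum_congr hceq
      _ = (∑' n, b n) - ∑' n : ℕ, (if n = 0 then (1 : ℝ) else 0) := Summable.tsum_sub hBsum hsum_e
      _ = (∑' n, b n) - 1 := by rw [htsum_e]
  have hBeq : ∑' n, b n = 1 / (1 - ∑' n, a n) := by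
    have h2 : (1 : ℝ) - ∑' n, a n ≠ 0 := by
      have h3 : 0 ≤ ∑' n, a n := tsum_nonneg ha
      intro h; rw [sub_eq_zero] at h; rw [← h] at hA1; exact lt_irrefl _ hA1
    field_simp
    linarith [hBeq1]
  refine ⟨⟨hBsum, hBeq⟩, fun k _ => ?_⟩
  -- moment equivalence
  have hfun_a : (fun n => f n * (n : ℝ) ^ k * R ^ n) = fun n => a n * (n : ℝ) ^ k :=
    funext fun n => by simp only [ha_def]; ring
  have hfun_b : (fun n => u n * (n : ℝ) ^ k * R ^ n) = fun n => b n * (n : ℝ) ^ k :=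
    funext fun n => by simp only [hb_def]; ring
  rw [hfun_a, hfun_b]
  -- forward: by strong induction
  have forward : ∀ m : ℕ, Summable (fun n => a n * (n : ℝ) ^ m) →
      Summable (fun n => b n * (n : ℝ) ^ m) := by
    intro m
    induction m using Nat.strong_induction_on with
    | _ m ih =>
      intro ham
      have hAj : ∀ j, j ≤ m → Summable (fun n => a n * (n : ℝ) ^ j) := by
        intro j hj
        refine Summable.of_nonneg_of_le (fun n => mul_nonneg (ha n) (by positivity))
          (fun n => ?_) ham
        rcases Nat.eq_zero_or_pos n with h | h
        · simp [h, ha0]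
        · exact mul_le_mul_of_nonneg_left
            (pow_le_pow_right₀ (by exact_mod_cast h) hj) (ha n)
      exact renewal_key ha hbnn hb0 hbn hA hA1 m hAj
        (fun l hl => ih l hl (hAj l (by omega)))
  -- backward: a n ≤ b n for n ≥ 1
  have hab : ∀ n, 1 ≤ n → a n ≤ b n := by
    intro n hn
    rw [hbn n hn]
    have h1 := Finset.single_le_sum (f := fun i => a i * b (n - i))
      (fun i hi => mul_nonneg (ha i) (hbnn _)) (by simp only [mem_Icc]; omega : n ∈ Icc 1 n)
    simpa [hb0] using h1
  constructor
  · exact forward k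
  · intro hbm
    refine Summable.of_nonneg_of_le (fun n => mul_nonneg (ha n) (by positivity))
      (fun n => ?_) hbm
    rcases Nat.eq_zero_or_pos n with h | h
    · subst h
      simp only [ha0, zero_mul]
      exact mul_nonneg (hbnn 0) (by positivity)
    · exact mul_le_mul_of_nonneg_right (hab n h) (by positivity)
end

section
/- Let (a_n)_{n≥0} be a sequence of nonnegative reals with a_0 > 0, a_0 + a_1 < 1, ∑_{n=0}^∞ a_n = 1, and ∑_{n=1}^∞ n a_n = 1. Define ψ(h) = G(1−h) − (1−h) for h ∈ [0,1], where G(t) = ∑_{n=0}^∞ a_n t^n. Then ψ is continuous and strictly increasing on [0,1] with ψ(0) = 0 and ψ(1) = a_0, ψ(x+y) ≥ ψ(x) + ψ(y) whenever x, y ≥ 0 and x + y ≤ 1, and ψ(nx) ≤ n²ψ(x) for every positive integer n and every x ∈ [0, 1/n]; that is, ψ ∈ ℋ'. -/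
noncomputable def Stmt5F (n : ℕ) (h : ℝ) : ℝ := (1-h)^n - 1 + n*h

lemma Stmt5F_eq (n : ℕ) (h : ℝ) :
    Stmt5F n h = h * ∑ k ∈ Finset.range n, (1 - (1-h)^k) := by
  unfold Stmt5F
  rw [Finset.sum_sub_distrib, Finset.sum_const, Finset.card_range, nsmul_eq_mul, mul_one]
  linear_combination - geom_sum_mul (1-h) n

lemma Stmt5F_eq2 (n : ℕ) (h : ℝ) :
    Stmt5F n h = h^2 * ∑ k ∈ Finset.range n, ∑ j ∈ Finset.range k, (1-h)^j := by
  rw [Stmt5F_eq]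
  rw [show ∑ k ∈ Finset.range n, (1 - (1-h)^k)
      = h * ∑ k ∈ Finset.range n, ∑ j ∈ Finset.range k, (1-h)^j from by
    rw [Finset.mul_sum]
    exact Finset.sum_congr rfl fun k _ => by linear_combination geom_sum_mul (1-h) k]
  ring

lemma Stmt5g_nonneg (n : ℕ) {h : ℝ} (h0 : 0 ≤ h) (h1 : h ≤ 1) :
    0 ≤ ∑ k ∈ Finset.range n, (1 - (1-h)^k) := by
  apply Finset.sum_nonneg
  intro k _
  have : (1-h)^k ≤ 1 := pow_le_one₀ (by linarith) (by linarith)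
  linarith

lemma Stmt5g_mono (n : ℕ) {h1 h2 : ℝ} (h0 : 0 ≤ h1) (hle : h1 ≤ h2) (hb : h2 ≤ 1) :
    ∑ k ∈ Finset.range n, (1 - (1-h1)^k) ≤ ∑ k ∈ Finset.range n, (1 - (1-h2)^k) := by
  apply Finset.sum_le_sum
  intro k _
  have : (1-h2)^k ≤ (1-h1)^k := pow_le_pow_left₀ (by linarith) (by linarith) k
  linarith

lemma Stmt5F_nonneg (n : ℕ) {h : ℝ} (h0 : 0 ≤ h) (h1 : h ≤ 1) : 0 ≤ Stmt5F n h := by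
  rw [Stmt5F_eq]
  exact mul_nonneg h0 (Stmt5g_nonneg n h0 h1)

lemma Stmt5F_le (n : ℕ) {h : ℝ} (h0 : 0 ≤ h) (h1 : h ≤ 1) : Stmt5F n h ≤ n := by
  unfold Stmt5F
  have h2 : (1-h:ℝ)^n ≤ 1 := pow_le_one₀ (by linarith) (by linarith)
  have h3 : (n:ℝ)*h ≤ (n:ℝ)*1 := mul_le_mul_of_nonneg_left h1 (Nat.cast_nonneg n)
  linarith

lemma Stmt5F_mono (n : ℕ) {h1 h2 : ℝ} (h0 : 0 ≤ h1) (hle : h1 ≤ h2) (hb : h2 ≤ 1) :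
    Stmt5F n h1 ≤ Stmt5F n h2 := by
  rw [Stmt5F_eq, Stmt5F_eq]
  exact mul_le_mul hle (Stmt5g_mono n h0 hle hb) (Stmt5g_nonneg n h0 (le_trans hle hb))
    (le_trans h0 hle)

lemma Stmt5F_strict {n : ℕ} (hn : 2 ≤ n) {h1 h2 : ℝ} (h0 : 0 ≤ h1) (hlt : h1 < h2)
    (hb : h2 ≤ 1) : Stmt5F n h1 < Stmt5F n h2 := by
  rw [Stmt5F_eq, Stmt5F_eq]
  have hg12 := Stmt5g_mono n h0 hlt.le hb
  have hgpos : 0 < ∑ k ∈ Finset.range n, (1 - (1-h2)^k) := by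
    have h2pos : 0 < h2 := lt_of_le_of_lt h0 hlt
    have hmem : 1 ∈ Finset.range n := Finset.mem_range.mpr (by omega)
    have hterm : (1:ℝ) - (1-h2)^1 = h2 := by ring
    have := Finset.single_le_sum (f := fun k => (1:ℝ) - (1-h2)^k)
      (fun k _ => by
        show (0:ℝ) ≤ 1 - (1-h2)^k
        have : (1-h2)^k ≤ 1 := pow_le_one₀ (by linarith) (by linarith)
        linarith) hmem
    simp only [pow_one] at this
    linarith
  nlinarith [Stmt5g_nonneg n h0 (by linarith : h1 ≤ 1)]

lemma Stmt5F_super (n : ℕ) {x y : ℝ} (hx : 0 ≤ x) (hy : 0 ≤ y) (hxy : x + y ≤ 1) :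
    Stmt5F n x + Stmt5F n y ≤ Stmt5F n (x+y) := by
  rw [Stmt5F_eq, Stmt5F_eq, Stmt5F_eq]
  have hgx := Stmt5g_mono n hx (by linarith : x ≤ x + y) hxy
  have hgy := Stmt5g_mono n hy (by linarith : y ≤ x + y) hxy
  nlinarith [mul_le_mul_of_nonneg_left hgx hx, mul_le_mul_of_nonneg_left hgy hy]

lemma Stmt5F_c2 (n m : ℕ) {x : ℝ} (hx : 0 ≤ x) (hmx : (m:ℝ)*x ≤ 1) (hm : 1 ≤ (m:ℝ)) :
    Stmt5F n ((m:ℝ)*x) ≤ (m:ℝ)^2 * Stmt5F n x := by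
  rw [Stmt5F_eq2, Stmt5F_eq2]
  have hS : ∑ k ∈ Finset.range n, ∑ j ∈ Finset.range k, (1-(m:ℝ)*x)^j
      ≤ ∑ k ∈ Finset.range n, ∑ j ∈ Finset.range k, (1-x)^j := by
    apply Finset.sum_le_sum; intro k _
    apply Finset.sum_le_sum; intro j _
    exact pow_le_pow_left₀ (by linarith) (by nlinarith) j
  calc ((m:ℝ)*x)^2 * ∑ k ∈ Finset.range n, ∑ j ∈ Finset.range k, (1-(m:ℝ)*x)^j
      ≤ ((m:ℝ)*x)^2 * ∑ k ∈ Finset.range n, ∑ j ∈ Finset.range k, (1-x)^j :=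
        mul_le_mul_of_nonneg_left hS (sq_nonneg _)
    _ = (m:ℝ)^2 * (x^2 * ∑ k ∈ Finset.range n, ∑ j ∈ Finset.range k, (1-x)^j) := by ring

/- STATEMENT 5: Lemma 3.1 (1). With G(t) = ∑ a_n t^n and
ψ(h) = G(1-h) - (1-h), under the null-recurrence assumptions ψ belongs to ℋ':
continuous and strictly increasing on [0,1], ψ(0)=0, ψ(1)=a₀, superadditive (c1),
and ψ(nx) ≤ n² ψ(x) for x ∈ [0,1/n] (c2). -/
theorem stmt_5 (a : ℕ → ℝ) (ha : ∀ n, 0 ≤ a n) (ha0 : 0 < a 0)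
    (ha01 : a 0 + a 1 < 1)
    (hsum : ∑' n, a n = 1) (hμ : ∑' n : ℕ, (n : ℝ) * a n = 1) :
    ContinuousOn (fun h : ℝ => (∑' n : ℕ, a n * (1 - h) ^ n) - (1 - h)) (Set.Icc 0 1) ∧
    StrictMonoOn (fun h : ℝ => (∑' n : ℕ, a n * (1 - h) ^ n) - (1 - h)) (Set.Icc 0 1) ∧
    ((∑' n : ℕ, a n * (1 - (0:ℝ)) ^ n) - (1 - (0:ℝ)) = 0) ∧
    ((∑' n : ℕ, a n * (1 - (1:ℝ)) ^ n) - (1 - (1:ℝ)) = a 0) ∧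
    (∀ x y : ℝ, 0 ≤ x → 0 ≤ y → x + y ≤ 1 →
      ((∑' n : ℕ, a n * (1 - x) ^ n) - (1 - x)) +
        ((∑' n : ℕ, a n * (1 - y) ^ n) - (1 - y)) ≤
      (∑' n : ℕ, a n * (1 - (x + y)) ^ n) - (1 - (x + y))) ∧
    (∀ m : ℕ, 0 < m → ∀ x : ℝ, 0 ≤ x → x ≤ 1 / m →
      (∑' n : ℕ, a n * (1 - (m * x)) ^ n) - (1 - (m * x)) ≤
        (m : ℝ) ^ 2 * ((∑' n : ℕ, a n * (1 - x) ^ n) - (1 - x))) := by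
  have hsa : Summable a := by
    by_contra hc
    rw [tsum_eq_zero_of_not_summable hc] at hsum
    norm_num at hsum
  have hsna : Summable (fun n : ℕ => (n:ℝ) * a n) := by
    by_contra hc
    rw [tsum_eq_zero_of_not_summable hc] at hμ
    norm_num at hμ
  have hsp : ∀ h : ℝ, 0 ≤ h → h ≤ 1 → Summable (fun n : ℕ => a n * (1-h)^n) := by
    intro h h0 h1
    refine hsa.of_nonneg_of_le (fun n => mul_nonneg (ha n) (pow_nonneg (by linarith) n))
      (fun n => ?_)
    calc a n * (1-h)^n ≤ a n * 1 :=
          mul_le_mul_of_nonneg_left (pow_le_one₀ (by linarith) (by linarith)) (ha n)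
      _ = a n := mul_one _
  have hsna' : Summable (fun n : ℕ => a n * (n:ℝ)) := hsna.congr fun n => by ring
  have hsF : ∀ h : ℝ, 0 ≤ h → h ≤ 1 → Summable (fun n : ℕ => a n * Stmt5F n h) := by
    intro h h0 h1
    refine Summable.of_nonneg_of_le
      (fun n => mul_nonneg (ha n) (Stmt5F_nonneg n h0 h1)) (fun n => ?_)
      hsna'
    exact mul_le_mul_of_nonneg_left (Stmt5F_le n h0 h1) (ha n)
  have key : ∀ h : ℝ, 0 ≤ h → h ≤ 1 →
      (∑' n : ℕ, a n * (1-h)^n) - (1-h) = ∑' n : ℕ, a n * Stmt5F n h := by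
    intro h h0 h1
    have e1 : ∀ n : ℕ, a n * Stmt5F n h = a n * (1-h)^n + (h * ((n:ℝ) * a n) - a n) := by
      intro n; unfold Stmt5F; ring
    rw [tsum_congr e1, Summable.tsum_add (hsp h h0 h1) ((hsna.mul_left h).sub hsa),
        Summable.tsum_sub (hsna.mul_left h) hsa, tsum_mul_left, hsum, hμ]
    ring
  refine ⟨?_, ?_, ?_, ?_, ?_, ?_⟩
  · apply ContinuousOn.sub ?_ (by fun_prop)
    rw [continuousOn_iff_continuous_restrict]
    have hre : (Set.Icc (0:ℝ) 1).restrict (fun h : ℝ => ∑' n : ℕ, a n * (1-h)^n)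
        = fun x : Set.Icc (0:ℝ) 1 => ∑' n : ℕ, a n * (1-(x:ℝ))^n := rfl
    change Continuous (fun x : Set.Icc (0:ℝ) 1 => ∑' n : ℕ, a n * (1-(x:ℝ))^n)
    apply continuous_tsum (fun i => by fun_prop) hsa
    intro n x
    rw [Real.norm_eq_abs, abs_mul, abs_of_nonneg (ha n), abs_pow]
    have hx1 := x.2.1
    have hx2 := x.2.2
    have : |1 - (x:ℝ)| ≤ 1 := by rw [abs_le]; constructor <;> linarith
    calc a n * |1 - (x:ℝ)|^n ≤ a n * 1 :=
          mul_le_mul_of_nonneg_left (pow_le_one₀ (abs_nonneg _) this) (ha n)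
      _ = a n := mul_one _
  · intro h1 hm1 h2 hm2 hlt
    simp only
    rw [key h1 hm1.1 hm1.2, key h2 hm2.1 hm2.2]
    obtain ⟨N, hN2, hNpos⟩ : ∃ N, 2 ≤ N ∧ 0 < a N := by
      by_contra hc
      push_neg at hc
      have hz : ∀ n, 2 ≤ n → a n = 0 := fun n hn => le_antisymm (hc n hn) (ha n)
      have hts : ∑' n, a n = ∑ n ∈ Finset.range 2, a n := by
        apply tsum_eq_sum
        intro b hb
        exact hz b (by simp [Finset.mem_range] at hb; omega)
      rw [hsum, Finset.sum_range_succ, Finset.sum_range_one] at hts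
      linarith
    have hd : Summable (fun n : ℕ => a n * Stmt5F n h2 - a n * Stmt5F n h1) :=
      (hsF h2 hm2.1 hm2.2).sub (hsF h1 hm1.1 hm1.2)
    have hlb : a N * Stmt5F N h2 - a N * Stmt5F N h1
        ≤ ∑' n : ℕ, (a n * Stmt5F n h2 - a n * Stmt5F n h1) := by
      apply Summable.le_tsum hd N
      intro n _
      have := Stmt5F_mono n hm1.1 hlt.le hm2.2
      nlinarith [ha n]
    rw [Summable.tsum_sub (hsF h2 hm2.1 hm2.2) (hsF h1 hm1.1 hm1.2)] at hlb
    have hF : Stmt5F N h1 < Stmt5F N h2 := Stmt5F_strict hN2 hm1.1 hlt hm2.2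
    nlinarith [mul_pos hNpos (sub_pos.mpr hF)]
  · norm_num [hsum]
  · norm_num
    rw [tsum_eq_single 0 (fun b hb => by simp [zero_pow hb])]
    simp
  · intro x y hx hy hxy
    rw [key x hx (by linarith), key y hy (by linarith), key (x+y) (by linarith) hxy]
    rw [← Summable.tsum_add (hsF x hx (by linarith)) (hsF y hy (by linarith))]
    apply Summable.tsum_le_tsum ?_
      ((hsF x hx (by linarith)).add (hsF y hy (by linarith)))
      (hsF (x+y) (by linarith) hxy)
    intro n
    have h1 := Stmt5F_super n hx hy hxy
    have := mul_le_mul_of_nonneg_left h1 (ha n)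
    nlinarith
  · intro m hm x hx hxm
    have hmR : (1:ℝ) ≤ (m:ℝ) := by exact_mod_cast hm
    have hmpos : (0:ℝ) < m := by linarith
    have hmx1 : (m:ℝ) * x ≤ 1 := by
      have := (div_le_div_iff_of_pos_right hmpos).mpr hxm
      rw [le_div_iff₀ hmpos] at hxm
      nlinarith
    have hx1 : x ≤ 1 := by nlinarith
    rw [key x hx hx1, key ((m:ℝ)*x) (by positivity) hmx1]
    rw [← tsum_mul_left]
    apply Summable.tsum_le_tsum ?_
      (hsF ((m:ℝ)*x) (by positivity) hmx1)
      ((hsF x hx hx1).mul_left _)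
    intro n
    have hc2 := Stmt5F_c2 n m hx hmx1 hmR
    calc a n * Stmt5F n ((m:ℝ)*x) ≤ a n * ((m:ℝ)^2 * Stmt5F n x) :=
          mul_le_mul_of_nonneg_left hc2 (ha n)
      _ = (m:ℝ)^2 * (a n * Stmt5F n x) := by ring
end

section
/- Let (a_n)_{n≥0} be nonnegative reals with a_0 > 0, a_0 + a_1 < 1, ∑_{n=0}^∞ a_n = 1 and ∑_{n=1}^∞ n a_n = 1, and let G(t) = ∑_{n=0}^∞ a_n t^n. Let F : (0,1) → (0,1) satisfy F(t) = t·G(F(t)) for all t ∈ (0,1) and lim_{t→1−} F(t) = 1. Then 1 − F(t) ∼ ψ^{−1}(1−t) as t → 1−: there exist constants 0 < c₁ < c₂ and t₀ ∈ (0,1) such that c₁·ψ^{−1}(1−t) ≤ 1 − F(t) ≤ c₂·ψ^{−1}(1−t) for all t ∈ (t₀, 1). -/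
/- Auxiliary lemmas -/

private lemma pow_sub_pow_le' (u v : ℝ) (n : ℕ) (hv : 0 ≤ v) (hvu : v ≤ u) (hu : u ≤ 1) :
    u ^ n - v ^ n ≤ n * (u - v) := by
  induction n with
  | zero => simp
  | succ n ih =>
    have h1 : v ^ n ≤ u ^ n := pow_le_pow_left₀ hv hvu n
    have h2 : v ^ n ≤ 1 := pow_le_one₀ hv (le_trans hvu hu)
    have h3 : 0 ≤ v ^ n := pow_nonneg hv n
    have hu0 : 0 ≤ u := le_trans hv hvu
    have heq : u ^ (n+1) - v ^ (n+1) = u * (u ^ n - v ^ n) + (u - v) * v ^ n := by ring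
    have e1 : u * (u ^ n - v ^ n) ≤ u ^ n - v ^ n := by nlinarith
    have e2 : (u - v) * v ^ n ≤ u - v := by nlinarith
    push_cast
    linarith

private lemma pow_sub_pow_lt' (u v : ℝ) (n : ℕ) (hn : 2 ≤ n) (hv : 0 ≤ v) (hvu : v < u)
    (hu : u ≤ 1) : u ^ n - v ^ n < n * (u - v) := by
  obtain ⟨m, rfl⟩ : ∃ m, n = m + 1 := ⟨n - 1, by omega⟩
  have hm : 1 ≤ m := by omega
  have ih := pow_sub_pow_le' u v m hv hvu.le hu
  have h1 : v ^ m ≤ v := by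
    calc v ^ m ≤ v ^ 1 := pow_le_pow_of_le_one hv (lt_of_lt_of_le hvu hu).le hm
      _ = v := pow_one v
  have hv1 : v < 1 := lt_of_lt_of_le hvu hu
  have hu0 : 0 ≤ u := le_trans hv hvu.le
  have h3 : 0 ≤ v ^ m := pow_nonneg hv m
  have heq : u ^ (m+1) - v ^ (m+1) = u * (u ^ m - v ^ m) + (u - v) * v ^ m := by ring
  have hvm1 : v ^ m < 1 := lt_of_le_of_lt h1 hv1
  have hdm : 0 ≤ u ^ m - v ^ m := sub_nonneg.2 (pow_le_pow_left₀ hv hvu.le m)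
  have : u * (u ^ m - v ^ m) ≤ u ^ m - v ^ m := by nlinarith
  have h4 : (u - v) * v ^ m < (u - v) * 1 := by
    apply mul_lt_mul_of_pos_left hvm1 (by linarith)
  push_cast
  nlinarith

private lemma midpoint_pow' (v : ℝ) (hv : 0 ≤ v) (n : ℕ) :
    2 * ((1 + v) / 2) ^ n ≤ 1 + v ^ n := by
  have h := (convexOn_pow n).2 (Set.mem_Ici.2 (by norm_num : (0:ℝ) ≤ 1)) (Set.mem_Ici.2 hv)
    (by norm_num : (0:ℝ) ≤ 1/2) (by norm_num : (0:ℝ) ≤ 1/2) (by norm_num)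
  simp only [smul_eq_mul] at h
  have he : (1:ℝ)/2 * 1 + 1/2 * v = (1 + v) / 2 := by ring
  rw [he] at h
  simp only [one_pow] at h
  linarith

theorem stmt_9 (a : ℕ → ℝ) (ha : ∀ n, 0 ≤ a n) (ha0 : 0 < a 0)
    (ha01 : a 0 + a 1 < 1)
    (hsum : ∑' n, a n = 1) (hμ : ∑' n : ℕ, (n : ℝ) * a n = 1)
    (F : ℝ → ℝ)
    (hF : ∀ t : ℝ, 0 < t → t < 1 → 0 < F t ∧ F t < 1)
    (hFeq : ∀ t : ℝ, 0 < t → t < 1 → F t = t * ∑' n : ℕ, a n * F t ^ n)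
    (hFlim : Filter.Tendsto F (nhdsWithin 1 (Set.Iio 1)) (nhds 1))
    (g : ℝ → ℝ)
    (hg1 : ∀ y, a 0 ≤ y → g y = 1)
    (hg2 : ∀ y, 0 ≤ y → y ≤ a 0 → g y ∈ Set.Icc (0:ℝ) 1 ∧
      (∑' n : ℕ, a n * (1 - g y) ^ n) - (1 - g y) = y) :
    ∃ c₁ c₂ t₀ : ℝ, 0 < c₁ ∧ c₁ < c₂ ∧ 0 < t₀ ∧ t₀ < 1 ∧
      ∀ t : ℝ, t₀ < t → t < 1 →
        c₁ * g (1 - t) ≤ 1 - F t ∧ 1 - F t ≤ c₂ * g (1 - t) := by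
  -- basic summabilities
  have hsa : Summable a := by
    by_contra h
    rw [tsum_eq_zero_of_not_summable h] at hsum; norm_num at hsum
  have hsna : Summable (fun n : ℕ => (n : ℝ) * a n) := by
    by_contra h
    rw [tsum_eq_zero_of_not_summable h] at hμ; norm_num at hμ
  -- summability of the generating series
  have hS : ∀ x : ℝ, 0 ≤ x → x ≤ 1 → Summable (fun n => a n * (1 - x) ^ n) := by
    intro x hx hx1
    refine Summable.of_nonneg_of_le
      (fun n => mul_nonneg (ha n) (pow_nonneg (by linarith) n)) (fun n => ?_) hsa
    calc a n * (1 - x) ^ n ≤ a n * 1 :=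
          mul_le_mul_of_nonneg_left (pow_le_one₀ (by linarith) (by linarith)) (ha n)
      _ = a n := mul_one _
  -- summability of the φ-series
  have hsphi : ∀ x : ℝ, 0 ≤ x → x ≤ 1 →
      Summable (fun n => a n * ((1 - x) ^ n - 1 + n * x)) := by
    intro x hx hx1
    have : (fun n : ℕ => a n * ((1 - x) ^ n - 1 + n * x))
        = fun n : ℕ => (a n * (1 - x) ^ n - a n) + ((n : ℝ) * a n) * x := by
      funext n; ring
    rw [this]
    exact (((hS x hx hx1).sub hsa).add (hsna.mul_right x))
  -- ψ in φ-form
  have hpsi_eq : ∀ x : ℝ, 0 ≤ x → x ≤ 1 →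
      (∑' n, a n * (1 - x) ^ n) - (1 - x) = ∑' n, a n * ((1 - x) ^ n - 1 + n * x) := by
    intro x hx hx1
    have hc : ∀ n : ℕ, a n * ((1 - x) ^ n - 1 + n * x)
        = (a n * (1 - x) ^ n - a n) + ((n : ℝ) * a n) * x := fun n => by ring
    rw [tsum_congr hc, Summable.tsum_add ((hS x hx hx1).sub hsa) (hsna.mul_right x),
      Summable.tsum_sub (hS x hx hx1) hsa, tsum_mul_right, hsum, hμ]
    ring
  -- existence of an index m ≥ 2 with a m > 0
  obtain ⟨m, hm2, ham⟩ : ∃ m, 2 ≤ m ∧ 0 < a m := by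
    by_contra h
    push_neg at h
    have hz : ∀ n ∉ ({0, 1} : Finset ℕ), a n = 0 := by
      intro n hn
      simp only [Finset.mem_insert, Finset.mem_singleton] at hn
      push_neg at hn
      exact le_antisymm (h n (by omega)) (ha n)
    rw [tsum_eq_sum hz] at hsum
    simp [Finset.sum_insert, Finset.sum_singleton] at hsum
    linarith
  -- strict monotonicity of ψ (in φ-form)
  have hmono : ∀ x y : ℝ, 0 ≤ x → x < y → y ≤ 1 →
      (∑' n, a n * ((1 - x) ^ n - 1 + n * x)) < ∑' n, a n * ((1 - y) ^ n - 1 + n * y) := by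
    intro x y hx hxy hy
    have hx1 : x ≤ 1 := by linarith
    have hy0 : 0 ≤ y := by linarith
    refine Summable.tsum_lt_tsum (f := fun n => a n * ((1 - x) ^ n - 1 + n * x)) (i := m)
      (fun n => ?_) ?_ (hsphi x hx hx1) (hsphi y hy0 hy)
    · apply mul_le_mul_of_nonneg_left _ (ha n)
      have := pow_sub_pow_le' (1 - x) (1 - y) n (by linarith) (by linarith) (by linarith)
      push_cast at this ⊢
      nlinarith
    · apply mul_lt_mul_of_pos_left _ ham
      have := pow_sub_pow_lt' (1 - x) (1 - y) m hm2 (by linarith) (by linarith) (by linarith)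
      push_cast at this ⊢
      nlinarith
  -- ψ(x/2) ≤ ψ(x)/2
  have hhalf : ∀ x : ℝ, 0 ≤ x → x ≤ 1 →
      (∑' n, a n * ((1 - x/2) ^ n - 1 + n * (x/2)))
        ≤ (∑' n, a n * ((1 - x) ^ n - 1 + n * x)) / 2 := by
    intro x hx hx1
    rw [← tsum_div_const]
    refine Summable.tsum_le_tsum (fun n => ?_) (hsphi (x/2) (by linarith) (by linarith)) ?_
    · have hmid := midpoint_pow' (1 - x) (by linarith) n
      have he : (1 + (1 - x)) / 2 = 1 - x/2 := by ring
      rw [he] at hmid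
      have : (1 - x/2) ^ n - 1 + n * (x/2) ≤ ((1 - x) ^ n - 1 + n * x) / 2 := by nlinarith
      calc a n * ((1 - x/2) ^ n - 1 + n * (x/2))
          ≤ a n * (((1 - x) ^ n - 1 + n * x) / 2) := mul_le_mul_of_nonneg_left this (ha n)
        _ = a n * ((1 - x) ^ n - 1 + n * x) / 2 := by ring
    · exact (hsphi x hx hx1).div_const 2
  -- 2ψ(x) ≤ ψ(2x)
  have hdouble : ∀ x : ℝ, 0 ≤ x → 2 * x ≤ 1 →
      2 * (∑' n, a n * ((1 - x) ^ n - 1 + n * x))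
        ≤ ∑' n, a n * ((1 - 2*x) ^ n - 1 + n * (2*x)) := by
    intro x hx hx1
    rw [← tsum_mul_left]
    refine Summable.tsum_le_tsum (fun n => ?_) ((hsphi x hx (by linarith)).mul_left 2)
      (hsphi (2*x) (by linarith) hx1)
    have hmid := midpoint_pow' (1 - 2*x) (by linarith) n
    have he : (1 + (1 - 2*x)) / 2 = 1 - x := by ring
    rw [he] at hmid
    have : 2 * ((1 - x) ^ n - 1 + n * x) ≤ (1 - 2*x) ^ n - 1 + n * (2*x) := by nlinarith
    calc 2 * (a n * ((1 - x) ^ n - 1 + n * x))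
        = a n * (2 * ((1 - x) ^ n - 1 + n * x)) := by ring
      _ ≤ a n * ((1 - 2*x) ^ n - 1 + n * (2*x)) := mul_le_mul_of_nonneg_left this (ha n)
  -- find t₁ with F t > 1/2 for t ∈ (t₁, 1)
  have hev : ∀ᶠ t in nhdsWithin 1 (Set.Iio 1), 1/2 < F t :=
    hFlim.eventually (eventually_gt_nhds (by norm_num))
  rw [eventually_nhdsWithin_iff] at hev
  obtain ⟨ε, hε, hball⟩ := Metric.eventually_nhds_iff.1 hev
  set t₁ : ℝ := max (1 - ε) (1/2) with ht₁def
  have ht₁lt : t₁ < 1 := by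
    apply max_lt (by linarith) (by norm_num)
  have hFhalf : ∀ t : ℝ, t₁ < t → t < 1 → 1/2 < F t := by
    intro t ht ht1
    have h1 : 1 - ε < t := lt_of_le_of_lt (le_max_left _ _) ht
    have hd : dist t 1 < ε := by
      rw [Real.dist_eq, abs_lt]
      constructor <;> linarith
    exact hball hd ht1
  -- choose t₀
  refine ⟨1/2, 2, max t₁ (max (1 - a 0) (1/2)), by norm_num, by norm_num, ?_, ?_, ?_⟩
  · exact lt_of_lt_of_le (by norm_num) (le_trans (le_max_right _ _) (le_max_right _ _))
  · exact max_lt ht₁lt (max_lt (by linarith) (by norm_num))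
  intro t ht ht1
  have ht₁t : t₁ < t := lt_of_le_of_lt (le_max_left _ _) ht
  have hta0 : 1 - a 0 < t := lt_of_le_of_lt (le_trans (le_max_left _ _) (le_max_right _ _)) ht
  have hthalf : 1/2 < t := lt_of_le_of_lt (le_trans (le_max_right _ _) (le_max_right _ _)) ht
  have ht0 : 0 < t := by linarith
  obtain ⟨hf0, hf1⟩ := hF t ht0 ht1
  have hFt : 1/2 < F t := hFhalf t ht₁t ht1
  set f := F t with hfdef
  set h := 1 - f with hhdef
  have hh0 : 0 < h := by simp only [hhdef]; linarith
  have hh1 : h < 1 := by simp only [hhdef]; linarith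
  -- ψ(h) = f * (1-t) / t
  have hGf : ∑' n, a n * f ^ n = f / t := by
    have := hFeq t ht0 ht1
    field_simp
    linarith [this]
  have hpsih : (∑' n, a n * ((1 - h) ^ n - 1 + n * h)) = f * (1 - t) / t := by
    rw [← hpsi_eq h hh0.le hh1.le]
    have h1h : 1 - h = f := by simp [hhdef]
    rw [h1h, hGf]
    field_simp
  -- g(1-t)
  have h1t0 : 0 ≤ 1 - t := by linarith
  have h1ta : 1 - t ≤ a 0 := by linarith
  obtain ⟨⟨hG00, hG01⟩, hpsiG0raw⟩ := hg2 (1 - t) h1t0 h1ta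
  set G0 := g (1 - t) with hG0def
  have hpsiG0 : (∑' n, a n * ((1 - G0) ^ n - 1 + n * G0)) = 1 - t := by
    rw [← hpsi_eq G0 hG00 hG01]; exact hpsiG0raw
  -- bounds on ψ(h)
  have hpsih_ub : (∑' n, a n * ((1 - h) ^ n - 1 + n * h)) ≤ 2 * (1 - t) := by
    rw [hpsih]
    rw [div_le_iff₀ ht0]
    nlinarith
  have hpsih_lb : (1 - t) / 2 ≤ (∑' n, a n * ((1 - h) ^ n - 1 + n * h)) := by
    rw [hpsih]
    rw [le_div_iff₀ ht0]
    nlinarith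
  constructor
  · -- lower bound : (1/2) * G0 ≤ h
    by_contra hc
    push_neg at hc
    have hG0half : h < G0 / 2 := by linarith
    have := hmono h (G0/2) hh0.le hG0half (by linarith)
    have hh2 := hhalf G0 hG00 hG01
    rw [hpsiG0] at hh2
    linarith
  · -- upper bound : h ≤ 2 * G0
    rcases le_or_gt 1 (2 * G0) with hcase | hcase
    · linarith
    · by_contra hc
      push_neg at hc
      have h2G0 : 2 * G0 < h := by linarith
      have := hmono (2*G0) h (by linarith) h2G0 hh1.le
      have hd := hdouble G0 hG00 hcase.le
      rw [hpsiG0] at hd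
      linarith
end

section
/- Let ψ₁, ψ₂ ∈ ℋ' and let n be a positive integer. (1) If there exists x₀ > 0 such that ψ₁(x) ≤ n·ψ₂(x) for all x ∈ (0, x₀), then there exists y₀ > 0 such that ψ₂^{−1}(y) ≤ n·ψ₁^{−1}(y) for all y ∈ (0, y₀). (2) If there exists x₀ > 0 such that ψ₁(x) ≥ n²·ψ₂(x) for all x ∈ (0, x₀), then there exists y₀ > 0 such that ψ₂^{−1}(y) ≥ n·ψ₁^{−1}(y) for all y ∈ (0, y₀). -/
lemma aux_superadd (f : ℝ → ℝ) (h0 : f 0 = 0)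
    (hc1 : ∀ x y : ℝ, 0 ≤ x → 0 ≤ y → x + y ≤ 1 → f x + f y ≤ f (x + y))
    (m : ℕ) : ∀ x : ℝ, 0 ≤ x → (m : ℝ) * x ≤ 1 → (m : ℝ) * f x ≤ f ((m : ℝ) * x) := by
  induction m with
  | zero => intro x hx h; simp [h0]
  | succ k ih =>
    intro x hx h
    push_cast at h
    have hk1 : ((k : ℝ) + 1) * x = (k : ℝ) * x + x := by ring
    have hkx : (k : ℝ) * x ≤ 1 := by linarith
    have hkx0 : 0 ≤ (k : ℝ) * x := by positivity
    have h1 : f ((k : ℝ) * x) + f x ≤ f ((k : ℝ) * x + x) := by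
      apply hc1 _ _ hkx0 hx; linarith
    have h2 := ih x hx hkx
    push_cast
    rw [hk1]
    linarith

/- STATEMENT 11: Lemma 3.3. ψ₁, ψ₂ ∈ ℋ' with extended inverses g₁, g₂, and n a
positive integer.
(1) If ψ₁ ≤ n ψ₂ near 0, then g₂ ≤ n g₁ near 0.
(2) If ψ₁ ≥ n² ψ₂ near 0, then g₂ ≥ n g₁ near 0. -/
theorem stmt_11 (ψ₁ ψ₂ : ℝ → ℝ)
    (h1c : ContinuousOn ψ₁ (Set.Icc 0 1)) (h1m : StrictMonoOn ψ₁ (Set.Icc 0 1))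
    (h10 : ψ₁ 0 = 0) (h1nn : ∀ x ∈ Set.Icc (0:ℝ) 1, 0 ≤ ψ₁ x)
    (h1c1 : ∀ x y : ℝ, 0 ≤ x → 0 ≤ y → x + y ≤ 1 → ψ₁ x + ψ₁ y ≤ ψ₁ (x + y))
    (h1c2 : ∀ m : ℕ, 0 < m → ∀ x : ℝ, 0 ≤ x → x ≤ 1 / m →
      ψ₁ (m * x) ≤ (m : ℝ) ^ 2 * ψ₁ x)
    (h2c : ContinuousOn ψ₂ (Set.Icc 0 1)) (h2m : StrictMonoOn ψ₂ (Set.Icc 0 1))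
    (h20 : ψ₂ 0 = 0) (h2nn : ∀ x ∈ Set.Icc (0:ℝ) 1, 0 ≤ ψ₂ x)
    (h2c1 : ∀ x y : ℝ, 0 ≤ x → 0 ≤ y → x + y ≤ 1 → ψ₂ x + ψ₂ y ≤ ψ₂ (x + y))
    (h2c2 : ∀ m : ℕ, 0 < m → ∀ x : ℝ, 0 ≤ x → x ≤ 1 / m →
      ψ₂ (m * x) ≤ (m : ℝ) ^ 2 * ψ₂ x)
    (g₁ : ℝ → ℝ)
    (hg11 : ∀ y, ψ₁ 1 ≤ y → g₁ y = 1)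
    (hg12 : ∀ y, 0 ≤ y → y ≤ ψ₁ 1 → g₁ y ∈ Set.Icc (0:ℝ) 1 ∧ ψ₁ (g₁ y) = y)
    (g₂ : ℝ → ℝ)
    (hg21 : ∀ y, ψ₂ 1 ≤ y → g₂ y = 1)
    (hg22 : ∀ y, 0 ≤ y → y ≤ ψ₂ 1 → g₂ y ∈ Set.Icc (0:ℝ) 1 ∧ ψ₂ (g₂ y) = y)
    (n : ℕ) (hn : 0 < n) :
    ((∃ x₀ : ℝ, 0 < x₀ ∧ ∀ x : ℝ, 0 < x → x < x₀ → ψ₁ x ≤ (n : ℝ) * ψ₂ x) →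
      ∃ y₀ : ℝ, 0 < y₀ ∧ ∀ y : ℝ, 0 < y → y < y₀ → g₂ y ≤ (n : ℝ) * g₁ y) ∧
    ((∃ x₀ : ℝ, 0 < x₀ ∧ ∀ x : ℝ, 0 < x → x < x₀ → (n : ℝ) ^ 2 * ψ₂ x ≤ ψ₁ x) →
      ∃ y₀ : ℝ, 0 < y₀ ∧ ∀ y : ℝ, 0 < y → y < y₀ → (n : ℝ) * g₁ y ≤ g₂ y) := by
  have hnR : (0 : ℝ) < n := by exact_mod_cast hn
  have hnR1 : (1 : ℝ) ≤ n := by exact_mod_cast hn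
  have h0mem : (0 : ℝ) ∈ Set.Icc (0 : ℝ) 1 := by constructor <;> norm_num
  have h1mem : (1 : ℝ) ∈ Set.Icc (0 : ℝ) 1 := by constructor <;> norm_num
  constructor
  · rintro ⟨x₀, hx₀, hle⟩
    set δ : ℝ := min (min x₀ (1 / n)) 1 with hδdef
    have hδ0 : 0 < δ := by
      apply lt_min (lt_min hx₀ (by positivity)) one_pos
    have hδ1 : δ ≤ 1 := min_le_right _ _
    have hδmem : δ ∈ Set.Icc (0 : ℝ) 1 := ⟨le_of_lt hδ0, hδ1⟩
    have hψ1δ : 0 < ψ₁ δ := by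
      have := h1m h0mem hδmem hδ0
      rwa [h10] at this
    have hψ21 : 0 < ψ₂ 1 := by
      have := h2m h0mem h1mem one_pos
      rwa [h20] at this
    refine ⟨min (ψ₁ δ) (ψ₂ 1), lt_min hψ1δ hψ21, ?_⟩
    intro y hy hylt
    have hyψ1δ : y < ψ₁ δ := lt_of_lt_of_le hylt (min_le_left _ _)
    have hyψ21 : y ≤ ψ₂ 1 := le_of_lt (lt_of_lt_of_le hylt (min_le_right _ _))
    have hyψ11 : y ≤ ψ₁ 1 := le_of_lt (lt_of_lt_of_le hyψ1δ
      (h1m.monotoneOn hδmem h1mem hδ1))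
    obtain ⟨hg1mem, hg1eq⟩ := hg12 y (le_of_lt hy) hyψ11
    obtain ⟨hg2mem, hg2eq⟩ := hg22 y (le_of_lt hy) hyψ21
    set x : ℝ := g₁ y with hxdef
    have hxδ : x < δ := by
      by_contra hcon
      push_neg at hcon
      have := h1m.monotoneOn hδmem hg1mem hcon
      rw [hg1eq] at this; linarith
    have hx0 : 0 < x := by
      rcases lt_or_eq_of_le hg1mem.1 with h | h
      · exact h
      · exfalso; rw [← h, h10] at hg1eq; linarith
    have hxx₀ : x < x₀ := lt_of_lt_of_le hxδ (le_trans (min_le_left _ _) (min_le_left _ _))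
    have hxn : x < 1 / n := lt_of_lt_of_le hxδ (le_trans (min_le_left _ _) (min_le_right _ _))
    have hnx1 : (n : ℝ) * x ≤ 1 := by
      have := (lt_div_iff₀ hnR).mp hxn
      nlinarith
    have hsup : (n : ℝ) * ψ₂ x ≤ ψ₂ ((n : ℝ) * x) :=
      aux_superadd ψ₂ h20 h2c1 n x (le_of_lt hx0) hnx1
    have hkey : y ≤ ψ₂ ((n : ℝ) * x) := by
      have h1 : ψ₁ x ≤ (n : ℝ) * ψ₂ x := hle x hx0 hxx₀
      rw [← hg1eq]; linarith
    -- conclude g₂ y ≤ n * x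
    have hnxmem : (n : ℝ) * x ∈ Set.Icc (0 : ℝ) 1 := ⟨by positivity, hnx1⟩
    have : ψ₂ (g₂ y) ≤ ψ₂ ((n : ℝ) * x) := by rw [hg2eq]; exact hkey
    exact (h2m.le_iff_le hg2mem hnxmem).mp this
  · rintro ⟨x₀, hx₀, hge⟩
    set δ : ℝ := min x₀ 1 with hδdef
    have hδ0 : 0 < δ := lt_min hx₀ one_pos
    have hδ1 : δ ≤ 1 := min_le_right _ _
    have hδmem : δ ∈ Set.Icc (0 : ℝ) 1 := ⟨le_of_lt hδ0, hδ1⟩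
    have hψ2δ : 0 < ψ₂ δ := by
      have := h2m h0mem hδmem hδ0
      rwa [h20] at this
    refine ⟨ψ₂ δ, hψ2δ, ?_⟩
    intro y hy hylt
    have hyψ21 : y ≤ ψ₂ 1 := le_of_lt (lt_of_lt_of_le hylt (h2m.monotoneOn hδmem h1mem hδ1))
    obtain ⟨hg2mem, hg2eq⟩ := hg22 y (le_of_lt hy) hyψ21
    set x : ℝ := g₂ y with hxdef
    have hxδ : x < δ := by
      by_contra hcon
      push_neg at hcon
      have := h2m.monotoneOn hδmem hg2mem hcon
      rw [hg2eq] at this; linarith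
    have hx0 : 0 < x := by
      rcases lt_or_eq_of_le hg2mem.1 with h | h
      · exact h
      · exfalso; rw [← h, h20] at hg2eq; linarith
    have hxn0 : 0 < x / n := by positivity
    have hxnx₀ : x / n < x₀ := by
      have : x / n ≤ x := by
        rw [div_le_iff₀ hnR]; nlinarith
      exact lt_of_le_of_lt this (lt_of_lt_of_le hxδ (min_le_left _ _))
    have hxnle : x / n ≤ 1 / n := by
      gcongr
      exact hg2mem.2
    have hxnmem : x / n ∈ Set.Icc (0 : ℝ) 1 := ⟨le_of_lt hxn0, by
      have : (1 : ℝ) / n ≤ 1 := by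
        rw [div_le_one hnR]; exact hnR1
      linarith⟩
    have hc2 : ψ₂ ((n : ℝ) * (x / n)) ≤ (n : ℝ) ^ 2 * ψ₂ (x / n) :=
      h2c2 n hn (x / n) (le_of_lt hxn0) hxnle
    have hxeq : (n : ℝ) * (x / n) = x := by field_simp
    rw [hxeq] at hc2
    have hge' : (n : ℝ) ^ 2 * ψ₂ (x / n) ≤ ψ₁ (x / n) := hge (x / n) hxn0 hxnx₀
    have hkey : y ≤ ψ₁ (x / n) := by rw [← hg2eq]; linarith
    have hyψ11 : y ≤ ψ₁ 1 := le_trans hkey (h1m.monotoneOn hxnmem h1mem hxnmem.2)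
    obtain ⟨hg1mem, hg1eq⟩ := hg12 y (le_of_lt hy) hyψ11
    have : ψ₁ (g₁ y) ≤ ψ₁ (x / n) := by rw [hg1eq]; exact hkey
    have hle' : g₁ y ≤ x / n := (h1m.le_iff_le hg1mem hxnmem).mp this
    calc (n : ℝ) * g₁ y ≤ (n : ℝ) * (x / n) := by nlinarith
      _ = x := hxeq
end

section
/- Let (a_n)_{n≥0} be nonnegative reals with a_0 > 0, a_0 + a_1 < 1, ∑_{n=0}^∞ a_n = 1 and ∑_{n=1}^∞ n a_n = 1, let G(t) = ∑_{n=0}^∞ a_n t^n, and let F : (0,1) → (0,1) satisfy F(t) = t·G(F(t)) for all t ∈ (0,1) and lim_{t→1−} F(t) = 1. Let ψ₁ ∈ ℋ'. Then: (1) if ψ(x)/ψ₁(x) → 0 as x → 0+, then (1 − F(t))/ψ₁^{−1}(1−t) → ∞ as t → 1−; (2) if ψ(x)/ψ₁(x) → ∞ as x → 0+, then (1 − F(t))/ψ₁^{−1}(1−t) → 0 as t → 1−; (3) if there are constants 0 < c₁ < c₂ and x₁ > 0 with c₁ψ₁(x) ≤ ψ(x) ≤ c₂ψ₁(x) for all x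 ∈ (0,x₁), then there are constants 0 < c₁' < c₂' and t₀ ∈ (0,1) with c₁'ψ₁^{−1}(1−t) ≤ 1 − F(t) ≤ c₂'ψ₁^{−1}(1−t) for all t ∈ (t₀,1). -/
open Filter Set Topology

/- STATEMENT 12: Proposition 3.1. ψ(h) = G(1-h) - (1-h) with G(t) = ∑ a_n t^n;
F : (0,1) → (0,1) satisfies F(t) = t G(F(t)) and F(t) → 1 as t → 1⁻;
ψ₁ ∈ ℋ' with extended inverse g₁. Then:
(1) ψ/ψ₁ → 0 at 0⁺  ⇒  (1-F(t))/g₁(1-t) → ∞ at 1⁻;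
(2) ψ/ψ₁ → ∞ at 0⁺  ⇒  (1-F(t))/g₁(1-t) → 0 at 1⁻;
(3) ψ ∼ ψ₁ at 0⁺  ⇒  1-F(t) ∼ g₁(1-t) at 1⁻. -/
set_option maxHeartbeats 2000000 in
theorem stmt_12 (a : ℕ → ℝ) (ha : ∀ n, 0 ≤ a n) (ha0 : 0 < a 0)
    (ha01 : a 0 + a 1 < 1)
    (hsum : ∑' n, a n = 1) (hμ : ∑' n : ℕ, (n : ℝ) * a n = 1)
    (F : ℝ → ℝ)
    (hF : ∀ t : ℝ, 0 < t → t < 1 → 0 < F t ∧ F t < 1)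
    (hFeq : ∀ t : ℝ, 0 < t → t < 1 → F t = t * ∑' n : ℕ, a n * F t ^ n)
    (hFlim : Filter.Tendsto F (nhdsWithin 1 (Set.Iio 1)) (nhds 1))
    (ψ₁ : ℝ → ℝ)
    (h1c : ContinuousOn ψ₁ (Set.Icc 0 1)) (h1m : StrictMonoOn ψ₁ (Set.Icc 0 1))
    (h10 : ψ₁ 0 = 0) (h1nn : ∀ x ∈ Set.Icc (0:ℝ) 1, 0 ≤ ψ₁ x)
    (h1c1 : ∀ x y : ℝ, 0 ≤ x → 0 ≤ y → x + y ≤ 1 → ψ₁ x + ψ₁ y ≤ ψ₁ (x + y))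
    (h1c2 : ∀ m : ℕ, 0 < m → ∀ x : ℝ, 0 ≤ x → x ≤ 1 / m →
      ψ₁ (m * x) ≤ (m : ℝ) ^ 2 * ψ₁ x)
    (g₁ : ℝ → ℝ)
    (hg11 : ∀ y, ψ₁ 1 ≤ y → g₁ y = 1)
    (hg12 : ∀ y, 0 ≤ y → y ≤ ψ₁ 1 → g₁ y ∈ Set.Icc (0:ℝ) 1 ∧ ψ₁ (g₁ y) = y) :
    (Filter.Tendsto
        (fun x : ℝ => ((∑' n : ℕ, a n * (1 - x) ^ n) - (1 - x)) / ψ₁ x)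
        (nhdsWithin 0 (Set.Ioi 0)) (nhds 0) →
      Filter.Tendsto (fun t : ℝ => (1 - F t) / g₁ (1 - t))
        (nhdsWithin 1 (Set.Iio 1)) Filter.atTop) ∧
    (Filter.Tendsto
        (fun x : ℝ => ((∑' n : ℕ, a n * (1 - x) ^ n) - (1 - x)) / ψ₁ x)
        (nhdsWithin 0 (Set.Ioi 0)) Filter.atTop →
      Filter.Tendsto (fun t : ℝ => (1 - F t) / g₁ (1 - t))
        (nhdsWithin 1 (Set.Iio 1)) (nhds 0)) ∧
    ((∃ c₁ c₂ x₁ : ℝ, 0 < c₁ ∧ c₁ < c₂ ∧ 0 < x₁ ∧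
        ∀ x : ℝ, 0 < x → x < x₁ →
          c₁ * ψ₁ x ≤ (∑' n : ℕ, a n * (1 - x) ^ n) - (1 - x) ∧
          (∑' n : ℕ, a n * (1 - x) ^ n) - (1 - x) ≤ c₂ * ψ₁ x) →
      ∃ c₁' c₂' t₀ : ℝ, 0 < c₁' ∧ c₁' < c₂' ∧ 0 < t₀ ∧ t₀ < 1 ∧
        ∀ t : ℝ, t₀ < t → t < 1 →
          c₁' * g₁ (1 - t) ≤ 1 - F t ∧ 1 - F t ≤ c₂' * g₁ (1 - t)) := by
  -- basic facts about ψ₁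
  have hψ1pos : ∀ x : ℝ, 0 < x → x ≤ 1 → 0 < ψ₁ x := by
    intro x hx hx1
    have h := h1m (Set.mem_Icc.mpr ⟨le_refl 0, zero_le_one⟩)
      (Set.mem_Icc.mpr ⟨hx.le, hx1⟩) hx
    rwa [h10] at h
  have hψ11 : 0 < ψ₁ 1 := hψ1pos 1 one_pos le_rfl
  have hmono : ∀ x y : ℝ, 0 ≤ x → x ≤ 1 → 0 ≤ y → y ≤ 1 → ψ₁ x ≤ ψ₁ y → x ≤ y := by
    intro x y hx hx1 hy hy1 hxy
    by_contra hcon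
    push_neg at hcon
    exact absurd (h1m (Set.mem_Icc.mpr ⟨hy, hy1⟩) (Set.mem_Icc.mpr ⟨hx, hx1⟩) hcon)
      (not_lt.mpr hxy)
  have hsuper : ∀ (k : ℕ) (x : ℝ), 0 ≤ x → (k:ℝ) * x ≤ 1 →
      (k:ℝ) * ψ₁ x ≤ ψ₁ ((k:ℝ) * x) := by
    intro k
    induction k with
    | zero => intro x hx hkx; simp [h10]
    | succ m ih =>
      intro x hx hkx
      have hcast : ((m + 1 : ℕ) : ℝ) = (m : ℝ) + 1 := by push_cast; ring
      rw [hcast] at hkx ⊢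
      have hmnn : (0:ℝ) ≤ (m:ℝ) := Nat.cast_nonneg m
      have hmx : (m:ℝ) * x ≤ 1 := by nlinarith
      have h1 := h1c1 ((m:ℝ)*x) x (by positivity) hx (by nlinarith)
      have h2 := ih x hx hmx
      have h3 : ((m:ℝ) + 1) * x = (m:ℝ)*x + x := by ring
      rw [h3]
      nlinarith
  -- the key identity: ψ(1 - F t) = (1-t) F(t) / t
  have hid : ∀ t : ℝ, 0 < t → t < 1 →
      (∑' n : ℕ, a n * (1 - (1 - F t)) ^ n) - (1 - (1 - F t)) = (1 - t) * F t / t := by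
    intro t ht0 ht1
    have h1 : (1:ℝ) - (1 - F t) = F t := by ring
    rw [h1]
    have hS : (∑' n : ℕ, a n * F t ^ n) = F t / t := by
      rw [eq_div_iff ht0.ne', mul_comm]
      exact (hFeq t ht0 ht1).symm
    rw [hS]
    field_simp
  -- facts about g₁ (1 - t)
  have hgfacts : ∀ t : ℝ, 1 - ψ₁ 1 < t → t < 1 →
      0 < g₁ (1-t) ∧ g₁ (1-t) ≤ 1 ∧ ψ₁ (g₁ (1-t)) = 1 - t := by
    intro t hta htb
    obtain ⟨hmem, hval⟩ := hg12 (1-t) (by linarith) (by linarith)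
    refine ⟨?_, hmem.2, hval⟩
    rcases lt_or_eq_of_le hmem.1 with h | h
    · exact h
    · exfalso; rw [← h, h10] at hval; linarith
  refine ⟨?_, ?_, ?_⟩
  -- Part (1)
  · intro Hψ
    rw [Filter.tendsto_atTop]
    intro K
    set n : ℕ := ⌈K⌉₊ + 1 with hn
    have hn1 : (1:ℝ) ≤ (n:ℝ) := by exact_mod_cast Nat.le_add_left 1 ⌈K⌉₊
    have hnK : K ≤ (n:ℝ) := by
      have h1 := Nat.le_ceil K
      have h2 : ((⌈K⌉₊ : ℕ) : ℝ) ≤ (n:ℝ) := by exact_mod_cast Nat.le_succ ⌈K⌉₊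
      linarith
    have hnpos : (0:ℝ) < (n:ℝ) := by linarith
    set M : ℝ := 2 * (n:ℝ)^2 with hM
    have hMpos : 0 < M := by rw [hM]; positivity
    have hev0 := Hψ (Iio_mem_nhds (one_div_pos.mpr hMpos))
    obtain ⟨δ, hδ, hδsub⟩ := mem_nhdsGT_iff_exists_Ioo_subset.mp hev0
    rw [Set.mem_Ioi] at hδ
    set δ' : ℝ := min δ (1/2) with hδ'def
    have hδ'pos : 0 < δ' := lt_min hδ (by norm_num)
    set t₁ : ℝ := max (1/2) (1 - ψ₁ 1) with ht₁def
    have ht₁lt : t₁ < 1 := max_lt (by norm_num) (by linarith)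
    have hevA : Ioo t₁ 1 ∈ 𝓝[<] (1:ℝ) := Ioo_mem_nhdsLT_of_mem ⟨ht₁lt, le_rfl⟩
    have hevB : ∀ᶠ t in 𝓝[<] (1:ℝ), 1 - δ' < F t :=
      hFlim.eventually (lt_mem_nhds (by linarith))
    filter_upwards [hevA, hevB] with t htA htB
    obtain ⟨htA1, htA2⟩ := htA
    have ht12 : (1:ℝ)/2 ≤ t₁ := le_max_left _ _
    have htψ : 1 - ψ₁ 1 ≤ t₁ := le_max_right _ _
    have ht0 : 0 < t := by linarith
    obtain ⟨hF0, hF1⟩ := hF t ht0 htA2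
    have hh0 : 0 < 1 - F t := by linarith
    have hh1 : 1 - F t < 1 := by linarith
    have hhδ : 1 - F t < δ := lt_of_lt_of_le (by linarith) (min_le_left _ _)
    have hFhalf : 1/2 ≤ F t := by
      have := min_le_right δ (1/2 : ℝ); linarith
    have hmem := hδsub ⟨hh0, hhδ⟩
    simp only [Set.mem_preimage, Set.mem_Iio] at hmem
    rw [hid t ht0 htA2] at hmem
    have hψ1h : 0 < ψ₁ (1 - F t) := hψ1pos _ hh0 hh1.le
    -- M * (1 - t) / 2 < ψ₁ (1 - F t)
    have hψflb : (1 - t) / 2 ≤ (1 - t) * F t / t := by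
      rw [le_div_iff₀ ht0]
      nlinarith
    rw [div_lt_div_iff₀ hψ1h hMpos, hM] at hmem
    have hψ1hlb : (n:ℝ)^2 * (1 - t) < ψ₁ (1 - F t) := by
      nlinarith [hψflb, sq_nonneg ((n:ℝ))]
    -- ψ₁ ((1 - F t)/n) ≥ ψ₁ (1 - F t) / n²
    have hc2' := h1c2 n (by omega) ((1 - F t)/(n:ℝ)) (by positivity)
      (by rw [div_le_div_iff₀ hnpos hnpos]; nlinarith)
    have hcanc : (n:ℝ) * ((1 - F t)/(n:ℝ)) = 1 - F t := by field_simp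
    rw [hcanc] at hc2'
    -- compare with g₁ (1 - t)
    obtain ⟨hg0, hg1, hgval⟩ := hgfacts t (by linarith) htA2
    have hkey : ψ₁ (g₁ (1 - t)) < ψ₁ ((1 - F t)/(n:ℝ)) := by
      rw [hgval]; nlinarith
    have hle : g₁ (1 - t) ≤ (1 - F t)/(n:ℝ) := by
      apply hmono _ _ hg0.le hg1 (by positivity) (by
        rw [div_le_one hnpos]; linarith) hkey.le
    rw [le_div_iff₀ hg0]
    have hng : g₁ (1 - t) * (n:ℝ) ≤ 1 - F t := by
      rw [← le_div_iff₀ hnpos]; exact hle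
    nlinarith
  -- Part (2)
  · intro Hψ
    rw [Metric.tendsto_nhds]
    intro ε hε
    set n : ℕ := ⌈2/ε⌉₊ + 1 with hn
    have hn1 : (1:ℝ) ≤ (n:ℝ) := by exact_mod_cast Nat.le_add_left 1 ⌈2/ε⌉₊
    have hnε : 2/ε ≤ (n:ℝ) := by
      have h1 := Nat.le_ceil (2/ε)
      have h2 : ((⌈2/ε⌉₊ : ℕ) : ℝ) ≤ (n:ℝ) := by exact_mod_cast Nat.le_succ ⌈2/ε⌉₊
      linarith
    have hnpos : (0:ℝ) < (n:ℝ) := by linarith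
    set M : ℝ := 2 * (n:ℝ)^2 with hM
    have hMpos : 0 < M := by rw [hM]; positivity
    have hev0 := Hψ.eventually (eventually_ge_atTop M)
    rw [Filter.eventually_iff] at hev0
    obtain ⟨δ, hδ, hδsub⟩ := mem_nhdsGT_iff_exists_Ioo_subset.mp hev0
    rw [Set.mem_Ioi] at hδ
    set δ' : ℝ := min δ (1/(2*(n:ℝ))) with hδ'def
    have hδ'pos : 0 < δ' := lt_min hδ (by positivity)
    set t₁ : ℝ := max (1/2) (1 - ψ₁ 1) with ht₁def
    have ht₁lt : t₁ < 1 := max_lt (by norm_num) (by linarith)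
    have hevA : Ioo t₁ 1 ∈ 𝓝[<] (1:ℝ) := Ioo_mem_nhdsLT_of_mem ⟨ht₁lt, le_rfl⟩
    have hevB : ∀ᶠ t in 𝓝[<] (1:ℝ), 1 - δ' < F t :=
      hFlim.eventually (lt_mem_nhds (by linarith))
    filter_upwards [hevA, hevB] with t htA htB
    obtain ⟨htA1, htA2⟩ := htA
    have ht12 : (1:ℝ)/2 ≤ t₁ := le_max_left _ _
    have htψ : 1 - ψ₁ 1 ≤ t₁ := le_max_right _ _
    have ht0 : 0 < t := by linarith
    obtain ⟨hF0, hF1⟩ := hF t ht0 htA2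
    have hh0 : 0 < 1 - F t := by linarith
    have hh1 : 1 - F t < 1 := by linarith
    have hhδ : 1 - F t < δ := lt_of_lt_of_le (by linarith) (min_le_left _ _)
    have hhn : 1 - F t ≤ 1/(2*(n:ℝ)) := by
      have := min_le_right δ (1/(2*(n:ℝ))); linarith
    have hhn2 : (1 - F t) * (2*(n:ℝ)) ≤ 1 := (le_div_iff₀ (by positivity)).mp hhn
    have hmem := hδsub ⟨hh0, hhδ⟩
    simp only [Set.mem_setOf_eq] at hmem
    rw [hid t ht0 htA2] at hmem
    have hψ1h : 0 < ψ₁ (1 - F t) := hψ1pos _ hh0 hh1.le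
    have hub : (1 - t) * F t / t ≤ 2 * (1 - t) := by
      rw [div_le_iff₀ ht0]
      nlinarith
    have hMψ : M * ψ₁ (1 - F t) ≤ (1 - t) * F t / t := (le_div_iff₀ hψ1h).mp hmem
    have hψ1hub : (n:ℝ)^2 * ψ₁ (1 - F t) ≤ 1 - t := by nlinarith
    have hc2' := h1c2 n (by omega) (1 - F t) hh0.le
      (by rw [le_div_iff₀ hnpos]
          linarith [hhn2, mul_nonneg hh0.le hnpos.le])
    obtain ⟨hg0, hg1, hgval⟩ := hgfacts t (by linarith) htA2
    have hnh1 : (n:ℝ) * (1 - F t) ≤ 1 := by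
      linarith [hhn2, mul_nonneg hh0.le hnpos.le]
    have hkey : ψ₁ ((n:ℝ) * (1 - F t)) ≤ ψ₁ (g₁ (1 - t)) := by
      rw [hgval]; linarith [hc2', hψ1hub]
    have hle : (n:ℝ) * (1 - F t) ≤ g₁ (1 - t) :=
      hmono _ _ (by positivity) hnh1 hg0.le hg1 hkey
    rw [Real.dist_eq, sub_zero, abs_of_nonneg (div_nonneg hh0.le hg0.le)]
    have hdiv : (1 - F t) / g₁ (1 - t) ≤ 1/(n:ℝ) := by
      rw [div_le_div_iff₀ hg0 hnpos]
      linarith [hle]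
    have h2εn : 2 ≤ ε * (n:ℝ) := by
      have := (div_le_iff₀ hε).mp hnε; linarith [mul_comm ε (n:ℝ)]
    have : 1/(n:ℝ) ≤ ε/2 := by
      rw [div_le_div_iff₀ hnpos (by norm_num : (0:ℝ) < 2)]
      nlinarith
    linarith
  -- Part (3)
  · rintro ⟨c₁, c₂, x₁, hc1, hc12, hx1, hbd⟩
    have hc2pos : 0 < c₂ := lt_trans hc1 hc12
    set m : ℕ := ⌈2/c₁⌉₊ + 2 with hmdef
    set n : ℕ := ⌈2*c₂⌉₊ + 1 with hndef
    have hm2 : (2:ℝ) ≤ (m:ℝ) := by exact_mod_cast Nat.le_add_left 2 ⌈2/c₁⌉₊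
    have hmge : 2/c₁ ≤ (m:ℝ) := by
      have h1 := Nat.le_ceil (2/c₁)
      have h2 : ((⌈2/c₁⌉₊ : ℕ) : ℝ) ≤ (m:ℝ) := by
        exact_mod_cast Nat.le_add_right ⌈2/c₁⌉₊ 2
      linarith
    have hn1 : (1:ℝ) ≤ (n:ℝ) := by exact_mod_cast Nat.le_add_left 1 ⌈2*c₂⌉₊
    have hnge : 2*c₂ ≤ (n:ℝ) := by
      have h1 := Nat.le_ceil (2*c₂)
      have h2 : ((⌈2*c₂⌉₊ : ℕ) : ℝ) ≤ (n:ℝ) := by exact_mod_cast Nat.le_succ ⌈2*c₂⌉₊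
      linarith
    have hnpos : (0:ℝ) < (n:ℝ) := by linarith
    set δ' : ℝ := min x₁ (1/2) with hδ'def
    have hδ'pos : 0 < δ' := lt_min hx1 (by norm_num)
    have hev : {t : ℝ | 1 - δ' < F t} ∈ 𝓝[<] (1:ℝ) := by
      have h := hFlim.eventually (lt_mem_nhds (by linarith : (1:ℝ) - δ' < 1))
      rwa [Filter.eventually_iff] at h
    obtain ⟨l, hl, hsub⟩ := mem_nhdsLT_iff_exists_Ioo_subset.mp hev
    rw [Set.mem_Iio] at hl
    refine ⟨1/(n:ℝ), (m:ℝ), max l (max (1/2) (1 - ψ₁ 1)), one_div_pos.mpr hnpos,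
      ?_, ?_, ?_, ?_⟩
    · have : 1/(n:ℝ) ≤ 1 := by rw [div_le_one hnpos]; linarith
      linarith
    · have h1 := le_max_left (1/2 : ℝ) (1 - ψ₁ 1)
      have h2 := le_max_right l (max (1/2:ℝ) (1 - ψ₁ 1))
      linarith
    · exact max_lt hl (max_lt (by norm_num) (by linarith))
    · intro t ht0 ht1
      have htl : l < t := lt_of_le_of_lt (le_max_left _ _) ht0
      have ht12 : (1:ℝ)/2 < t := by
        have h1 := le_max_left (1/2 : ℝ) (1 - ψ₁ 1)
        have h2 := le_max_right l (max (1/2:ℝ) (1 - ψ₁ 1))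
        linarith
      have htψ : 1 - ψ₁ 1 < t := by
        have h1 := le_max_right (1/2 : ℝ) (1 - ψ₁ 1)
        have h2 := le_max_right l (max (1/2:ℝ) (1 - ψ₁ 1))
        linarith
      have htpos : 0 < t := by linarith
      have hFt : 1 - δ' < F t := hsub ⟨htl, ht1⟩
      obtain ⟨hF0, hF1⟩ := hF t htpos ht1
      have hh0 : 0 < 1 - F t := by linarith
      have hh1 : 1 - F t < 1 := by linarith
      have hhx1 : 1 - F t < x₁ := lt_of_lt_of_le (by linarith) (min_le_left _ _)
      have hFhalf : 1/2 ≤ F t := by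
        have := min_le_right x₁ (1/2 : ℝ); linarith
      obtain ⟨hbdl, hbdu⟩ := hbd (1 - F t) hh0 hhx1
      rw [hid t htpos ht1] at hbdl hbdu
      have hψ1h : 0 < ψ₁ (1 - F t) := hψ1pos _ hh0 hh1.le
      obtain ⟨hg0, hg1, hgval⟩ := hgfacts t (by linarith) ht1
      have hψflb : (1 - t) / 2 ≤ (1 - t) * F t / t := by
        rw [le_div_iff₀ htpos]; nlinarith
      have hψfub : (1 - t) * F t / t ≤ 2 * (1 - t) := by
        rw [div_le_iff₀ htpos]; nlinarith
      constructor
      · -- lower bound: (1/n) g₁(1-t) ≤ 1 - F t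
        rcases le_or_gt 1 ((n:ℝ) * (1 - F t)) with hcase | hcase
        · rw [div_mul_eq_mul_div, one_mul, div_le_iff₀ hnpos]
          linarith [hg1, hcase]
        · have hsup := hsuper n (1 - F t) hh0.le hcase.le
          have hc2ψ : (1 - t) / 2 ≤ c₂ * ψ₁ (1 - F t) := le_trans hψflb hbdu
          have hkey : ψ₁ (g₁ (1 - t)) ≤ ψ₁ ((n:ℝ) * (1 - F t)) := by
            rw [hgval]
            nlinarith [hsup, hc2ψ,
              mul_nonneg (show (0:ℝ) ≤ (n:ℝ) - 2*c₂ by linarith) hψ1h.le]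
          have hle : g₁ (1 - t) ≤ (n:ℝ) * (1 - F t) :=
            hmono _ _ hg0.le hg1 (by positivity) hcase.le hkey
          rw [div_mul_eq_mul_div, one_mul, div_le_iff₀ hnpos]
          linarith [hle]
      · -- upper bound: 1 - F t ≤ m * g₁(1-t)
        rcases le_or_gt 1 ((m:ℝ) * g₁ (1 - t)) with hcase | hcase
        · linarith
        · have hsup := hsuper m (g₁ (1 - t)) hg0.le hcase.le
          rw [hgval] at hsup
          have h2mc1 : 2 ≤ (m:ℝ) * c₁ := by
            have := (div_le_iff₀ hc1).mp hmge; linarith [mul_comm (m:ℝ) c₁]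
          have hc1ψ : c₁ * ψ₁ (1 - F t) ≤ 2 * (1 - t) := le_trans hbdl hψfub
          have h3 : 2*(1-t) ≤ (m:ℝ)*c₁*(1-t) :=
            mul_le_mul_of_nonneg_right h2mc1 (by linarith)
          have hp : c₁ * ψ₁ (1 - F t) ≤ c₁ * ((m:ℝ) * (1 - t)) := by
            linarith [hc1ψ, h3]
          have hq : ψ₁ (1 - F t) ≤ (m:ℝ) * (1 - t) := (mul_le_mul_iff_of_pos_left hc1).mp hp
          have hkey : ψ₁ (1 - F t) ≤ ψ₁ ((m:ℝ) * g₁ (1 - t)) := by linarith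
          exact hmono _ _ hh0.le hh1.le (by positivity) hcase.le hkey
end

section
/- Let (a_n)_{n≥0} be nonnegative reals with a_0 > 0, a_0 + a_1 < 1, ∑_{n=0}^∞ a_n = 1 and ∑_{n=1}^∞ n a_n = 1, and assume ∑_{n=2}^∞ n(n−1)a_n < ∞ (i.e. G''(1) < ∞). Let G(t) = ∑_{n=0}^∞ a_n t^n and let (f_n)_{n≥1} be nonnegative reals with ∑_{n=1}^∞ f_n = 1 such that F(t) := ∑_{n=1}^∞ f_n t^n satisfies F(t) = t·G(F(t)) for all t ∈ (0,1). Then: (1) there exist constants 0 < c₁ < c₂ and t₀ ∈ (0,1) such that c₁√(1−t) ≤ 1 − F(t) ≤ c₂√(1−t) for all t ∈ (t₀,1); (2) for α ∈ (0,1), ∑_{n=1}^∞ f_n n^α < ∞ if and only if α < 1/2. -/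
open Finset Filter Real

lemma aux_summable_of_tsum_one {f : ℕ → ℝ} (h : ∑' n, f n = 1) : Summable f := by
  by_contra hs
  rw [tsum_eq_zero_of_not_summable hs] at h
  norm_num at h

lemma aux_summable_pow {f : ℕ → ℝ} (hf : ∀ n, 0 ≤ f n) (hs : Summable f)
    {t : ℝ} (h0 : 0 ≤ t) (h1 : t ≤ 1) : Summable (fun n => f n * t ^ n) := by
  refine Summable.of_nonneg_of_le (fun n => mul_nonneg (hf n) (pow_nonneg h0 n)) (fun n => ?_) hs
  calc f n * t ^ n ≤ f n * 1 :=
        mul_le_mul_of_nonneg_left (pow_le_one₀ h0 h1) (hf n)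
    _ = f n := mul_one _

lemma aux_F_le_one {f : ℕ → ℝ} (hf : ∀ n, 0 ≤ f n)
    (hfsum : ∑' n, f n = 1) {t : ℝ} (h0 : 0 ≤ t) (h1 : t ≤ 1) :
    ∑' n, f n * t ^ n ≤ 1 := by
  have hs := aux_summable_of_tsum_one hfsum
  calc ∑' n, f n * t ^ n ≤ ∑' n, f n :=
        Summable.tsum_le_tsum (fun n => by
          calc f n * t ^ n ≤ f n * 1 :=
            mul_le_mul_of_nonneg_left (pow_le_one₀ h0 h1) (hf n)
          _ = f n := mul_one _) (aux_summable_pow hf hs h0 h1) hs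
    _ = 1 := hfsum

lemma aux_F_nonneg {f : ℕ → ℝ} (hf : ∀ n, 0 ≤ f n) {t : ℝ} (h0 : 0 ≤ t) :
    0 ≤ ∑' n, f n * t ^ n :=
  tsum_nonneg fun n => mul_nonneg (hf n) (pow_nonneg h0 n)

lemma aux_F_lt_one {f : ℕ → ℝ} (hf : ∀ n, 0 ≤ f n) (hf0 : f 0 = 0)
    (hfsum : ∑' n, f n = 1) {t : ℝ} (h0 : 0 ≤ t) (h1 : t < 1) :
    ∑' n, f n * t ^ n < 1 := by
  have hs := aux_summable_of_tsum_one hfsum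
  obtain ⟨n₀, hn₀⟩ : ∃ n, f n ≠ 0 := by
    by_contra h
    push_neg at h
    have : ∑' n, f n = 0 := by simp [h]
    rw [this] at hfsum; norm_num at hfsum
  have hn₀pos : 0 < f n₀ := lt_of_le_of_ne (hf n₀) (Ne.symm hn₀)
  have hn1 : 1 ≤ n₀ := by
    rcases Nat.eq_zero_or_pos n₀ with h | h
    · exact absurd (h ▸ hf0) hn₀
    · exact h
  have hlt : f n₀ * t ^ n₀ < f n₀ := by
    have : t ^ n₀ < 1 := pow_lt_one₀ h0 h1 (by omega)
    nlinarith
  calc ∑' n, f n * t ^ n < ∑' n, f n := by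
        refine Summable.tsum_lt_tsum (fun n => ?_) hlt (aux_summable_pow hf hs h0 h1.le) hs
        calc f n * t ^ n ≤ f n * 1 :=
          mul_le_mul_of_nonneg_left (pow_le_one₀ h0 h1.le) (hf n)
        _ = f n := mul_one _
    _ = 1 := hfsum

lemma aux_nn (n : ℕ) : (0:ℝ) ≤ (n:ℝ) * ((n:ℝ) - 1) := by
  rcases Nat.eq_zero_or_pos n with h | h
  · simp [h]
  · have : (1:ℝ) ≤ (n:ℝ) := by exact_mod_cast h
    nlinarith

lemma aux_exists_m (a : ℕ → ℝ) (ha : ∀ n, 0 ≤ a n) (ha0 : 0 < a 0) (ha01 : a 0 + a 1 < 1)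
    (hsum : ∑' n, a n = 1) : ∃ m, 2 ≤ m ∧ 0 < a m := by
  by_contra h
  push_neg at h
  have hz : ∀ n, 2 ≤ n → a n = 0 := fun n hn => le_antisymm (h n hn) (ha n)
  have heq : ∑' n, a n = ∑ n ∈ Finset.range 2, a n := by
    refine tsum_eq_sum ?_
    intro n hn
    exact hz n (by simp at hn; omega)
  rw [heq] at hsum
  simp [Finset.sum_range_succ] at hsum
  linarith

lemma aux_key_s13 (a : ℕ → ℝ) (ha : ∀ n, 0 ≤ a n) (ha0 : 0 < a 0)
    (ha01 : a 0 + a 1 < 1)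
    (hsum : ∑' n, a n = 1) (hμ : ∑' n : ℕ, (n : ℝ) * a n = 1)
    (hG2 : Summable (fun n : ℕ => (n : ℝ) * ((n : ℝ) - 1) * a n))
    (f : ℕ → ℝ) (hf : ∀ n, 0 ≤ f n) (hf0 : f 0 = 0) (hfsum : ∑' n, f n = 1)
    (hFeq : ∀ t : ℝ, 0 < t → t < 1 →
      ∑' n : ℕ, f n * t ^ n = t * ∑' n : ℕ, a n * (∑' m : ℕ, f m * t ^ m) ^ n) :
    ∃ c₁ c₂ : ℝ, 0 < c₁ ∧ 0 < c₂ ∧ ∀ t : ℝ, 0 < t → t < 1 →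
      c₁ * Real.sqrt (1 - t) ≤ 1 - ∑' n : ℕ, f n * t ^ n ∧
      1 - ∑' n : ℕ, f n * t ^ n ≤ c₂ * Real.sqrt (1 - t) := by
  obtain ⟨m, hm2, hampos⟩ := aux_exists_m a ha ha0 ha01 hsum
  have has : Summable a := aux_summable_of_tsum_one hsum
  have hana : Summable (fun n : ℕ => (n:ℝ) * a n) := aux_summable_of_tsum_one hμ
  set σ : ℝ := ∑' n : ℕ, (n : ℝ) * ((n : ℝ) - 1) * a n with hσdef
  have hσpos : 0 < σ := by
    have hterm : (m:ℝ) * ((m:ℝ) - 1) * a m ≤ σ := by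
      refine Summable.le_tsum hG2 m (fun i _ => mul_nonneg (aux_nn i) (ha i))
    have h2m : (2:ℝ) ≤ (m:ℝ) := by exact_mod_cast hm2
    have : 0 < (m:ℝ) * ((m:ℝ) - 1) * a m :=
      mul_pos (mul_pos (by linarith) (by linarith)) hampos
    linarith
  refine ⟨Real.sqrt (2 * a 0 / σ), Real.sqrt (1 / a m), by positivity, by positivity, ?_⟩
  intro t ht0 ht1
  set s : ℝ := ∑' n : ℕ, f n * t ^ n with hsdef
  have hs0 : 0 ≤ s := aux_F_nonneg hf ht0.le
  have hs1 : s < 1 := aux_F_lt_one hf hf0 hfsum ht0.le ht1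
  set u : ℝ := 1 - s with hudef
  have hu0 : 0 < u := by simp [hudef]; linarith
  set x : ℝ := 1 - t with hxdef
  have hx0 : 0 < x := by simp [hxdef]; linarith
  -- G s
  set Gs : ℝ := ∑' n : ℕ, a n * s ^ n with hGdef
  have hsGs : Summable (fun n => a n * s ^ n) := aux_summable_pow ha has hs0 hs1.le
  have hGs1 : Gs ≤ 1 := aux_F_le_one ha hsum hs0 hs1.le
  have hGsa0 : a 0 ≤ Gs := by
    have := Summable.le_tsum hsGs 0 (fun i _ => mul_nonneg (ha i) (pow_nonneg hs0 i))
    simpa using this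
  -- geometric sums
  have hgeom : ∀ n : ℕ, (1 - s) * ∑ k ∈ Finset.range n, s ^ k = 1 - s ^ n := by
    intro n
    linear_combination -geom_sum_mul s n
  have hcle : ∀ n : ℕ, ∑ k ∈ Finset.range n, s ^ k ≤ (n:ℝ) := by
    intro n
    calc ∑ k ∈ Finset.range n, s ^ k ≤ ∑ k ∈ Finset.range n, 1 :=
          Finset.sum_le_sum (fun k _ => pow_le_one₀ hs0 hs1.le)
      _ = (n:ℝ) := by simp
  have hc0 : ∀ n : ℕ, 0 ≤ ∑ k ∈ Finset.range n, s ^ k :=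
    fun n => Finset.sum_nonneg (fun k _ => pow_nonneg hs0 k)
  -- A
  have hsA : Summable (fun n => a n * ∑ k ∈ Finset.range n, s ^ k) := by
    refine Summable.of_nonneg_of_le (fun n => mul_nonneg (ha n) (hc0 n)) (fun n => ?_) hana
    calc a n * ∑ k ∈ Finset.range n, s ^ k ≤ a n * (n:ℝ) :=
          mul_le_mul_of_nonneg_left (hcle n) (ha n)
      _ = (n:ℝ) * a n := mul_comm _ _
  set A : ℝ := ∑' n : ℕ, a n * ∑ k ∈ Finset.range n, s ^ k with hAdef
  have hA : 1 - Gs = u * A := by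
    have h1 : ∀ n : ℕ, a n - a n * s ^ n = u * (a n * ∑ k ∈ Finset.range n, s ^ k) := by
      intro n
      have := hgeom n
      calc a n - a n * s ^ n = a n * (1 - s ^ n) := by ring
        _ = a n * ((1 - s) * ∑ k ∈ Finset.range n, s ^ k) := by rw [this]
        _ = u * (a n * ∑ k ∈ Finset.range n, s ^ k) := by rw [hudef]; ring
    calc 1 - Gs = (∑' n, a n) - ∑' n, a n * s ^ n := by rw [hsum]
      _ = ∑' n, (a n - a n * s ^ n) := (Summable.tsum_sub has hsGs).symm
      _ = ∑' n, u * (a n * ∑ k ∈ Finset.range n, s ^ k) := by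
          exact tsum_congr h1
      _ = u * A := tsum_mul_left
  -- d n
  have hd0 : ∀ n : ℕ, 0 ≤ ∑ k ∈ Finset.range n, (1 - s ^ k) :=
    fun n => Finset.sum_nonneg (fun k _ => by
      have : s ^ k ≤ 1 := pow_le_one₀ hs0 hs1.le
      linarith)
  have hdle : ∀ n : ℕ, ∑ k ∈ Finset.range n, (1 - s ^ k) ≤ u * ((n:ℝ) * ((n:ℝ) - 1) / 2) := by
    intro n
    calc ∑ k ∈ Finset.range n, (1 - s ^ k) ≤ ∑ k ∈ Finset.range n, u * (k:ℝ) := by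
          refine Finset.sum_le_sum (fun k _ => ?_)
          have h1 := hgeom k
          have h2 : (1 - s) * ∑ j ∈ Finset.range k, s ^ j ≤ (1-s) * (k:ℝ) :=
            mul_le_mul_of_nonneg_left (hcle k) (by linarith)
          calc 1 - s ^ k = (1 - s) * ∑ j ∈ Finset.range k, s ^ j := h1.symm
            _ ≤ (1 - s) * (k:ℝ) := h2
            _ = u * (k:ℝ) := by rw [hudef]
      _ = u * ∑ k ∈ Finset.range n, (k:ℝ) := by rw [Finset.mul_sum]
      _ = u * ((n:ℝ) * ((n:ℝ) - 1) / 2) := by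
          congr 1
          induction n with
          | zero => simp
          | succ k ih => rw [Finset.sum_range_succ, ih]; push_cast; ring
  -- D
  have hsD : Summable (fun n => a n * ∑ k ∈ Finset.range n, (1 - s ^ k)) := by
    refine Summable.of_nonneg_of_le (fun n => mul_nonneg (ha n) (hd0 n)) (fun n => ?_)
      (hG2.mul_left (u/2))
    calc a n * ∑ k ∈ Finset.range n, (1 - s ^ k)
        ≤ a n * (u * ((n:ℝ) * ((n:ℝ) - 1) / 2)) :=
          mul_le_mul_of_nonneg_left (hdle n) (ha n)
      _ = u / 2 * ((n:ℝ) * ((n:ℝ) - 1) * a n) := by ring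
  set D : ℝ := ∑' n : ℕ, a n * ∑ k ∈ Finset.range n, (1 - s ^ k) with hDdef
  have hD : 1 - A = D := by
    have h1 : ∀ n : ℕ, (n:ℝ) * a n - a n * ∑ k ∈ Finset.range n, s ^ k
        = a n * ∑ k ∈ Finset.range n, (1 - s ^ k) := by
      intro n
      have hds : ∑ k ∈ Finset.range n, (1 - s ^ k) = (n:ℝ) - ∑ k ∈ Finset.range n, s ^ k := by
        rw [Finset.sum_sub_distrib]; simp
      rw [hds]; ring
    calc 1 - A = (∑' n : ℕ, (n:ℝ) * a n) - ∑' n, a n * ∑ k ∈ Finset.range n, s ^ k := by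
          rw [hμ]
      _ = ∑' n : ℕ, ((n:ℝ) * a n - a n * ∑ k ∈ Finset.range n, s ^ k) :=
          (Summable.tsum_sub hana hsA).symm
      _ = D := tsum_congr h1
  -- bounds on D
  have hDub : D ≤ u * σ / 2 := by
    calc D ≤ ∑' n : ℕ, u / 2 * ((n:ℝ) * ((n:ℝ) - 1) * a n) := by
          refine Summable.tsum_le_tsum (fun n => ?_) hsD (hG2.mul_left (u/2))
          calc a n * ∑ k ∈ Finset.range n, (1 - s ^ k)
              ≤ a n * (u * ((n:ℝ) * ((n:ℝ) - 1) / 2)) :=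
                mul_le_mul_of_nonneg_left (hdle n) (ha n)
            _ = u / 2 * ((n:ℝ) * ((n:ℝ) - 1) * a n) := by ring
      _ = u / 2 * σ := tsum_mul_left
      _ = u * σ / 2 := by ring
  have hDlb : a m * u ≤ D := by
    have hu_le : u ≤ ∑ k ∈ Finset.range m, (1 - s ^ k) := by
      have h1m : 1 ∈ Finset.range m := Finset.mem_range.mpr (by omega)
      have := Finset.single_le_sum (f := fun k => 1 - s ^ k)
        (fun k _ => sub_nonneg.mpr (pow_le_one₀ hs0 hs1.le)) h1m
      simpa [hudef] using this
    calc a m * u ≤ a m * ∑ k ∈ Finset.range m, (1 - s ^ k) :=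
          mul_le_mul_of_nonneg_left hu_le (ha m)
      _ ≤ D := Summable.le_tsum hsD m (fun i _ => mul_nonneg (ha i) (hd0 i))
  -- functional equation
  have hfe : s = t * Gs := by
    rw [hsdef, hGdef, hsdef]
    exact hFeq t ht0 ht1
  have hkey : u * D = x * Gs := by
    calc u * D = u * (1 - A) := by rw [hD]
      _ = u - (1 - Gs) := by rw [hA]; ring
      _ = Gs - s := by rw [hudef]; ring
      _ = x * Gs := by rw [hxdef, hfe]; ring
  clear_value D A Gs u x s σ
  -- final bounds
  have hxG : x * Gs ≤ x := by
    calc x * Gs ≤ x * 1 := mul_le_mul_of_nonneg_left hGs1 hx0.le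
      _ = x := mul_one x
  have hub : u ≤ Real.sqrt (1 / a m) * Real.sqrt x := by
    have h1 : a m * u ^ 2 ≤ x := by
      have h5 := mul_le_mul_of_nonneg_left hDlb hu0.le
      calc a m * u ^ 2 = u * (a m * u) := by ring
        _ ≤ u * D := h5
        _ = x * Gs := hkey
        _ ≤ x := hxG
    have h2 : u ^ 2 ≤ x * (1 / a m) := by
      rw [mul_one_div, le_div_iff₀ hampos]
      linarith [h1]
    calc u = Real.sqrt (u ^ 2) := (Real.sqrt_sq hu0.le).symm
      _ ≤ Real.sqrt (x * (1 / a m)) := Real.sqrt_le_sqrt h2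
      _ = Real.sqrt x * Real.sqrt (1 / a m) := Real.sqrt_mul hx0.le _
      _ = Real.sqrt (1 / a m) * Real.sqrt x := mul_comm _ _
  have hlb : Real.sqrt (2 * a 0 / σ) * Real.sqrt x ≤ u := by
    have h1 : x * a 0 ≤ u * D := by
      rw [hkey]
      exact mul_le_mul_of_nonneg_left hGsa0 hx0.le
    have h2 : u * D ≤ u ^ 2 * σ / 2 := by
      calc u * D ≤ u * (u * σ / 2) := mul_le_mul_of_nonneg_left hDub hu0.le
        _ = u ^ 2 * σ / 2 := by ring
    have h3 : x * (2 * a 0 / σ) ≤ u ^ 2 := by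
      have h4 : 2 * x * a 0 ≤ u ^ 2 * σ := by linarith [h1, h2]
      calc x * (2 * a 0 / σ) = 2 * x * a 0 / σ := by ring
        _ ≤ u ^ 2 := by rw [div_le_iff₀ hσpos]; linarith [h4]
    calc Real.sqrt (2 * a 0 / σ) * Real.sqrt x
        = Real.sqrt x * Real.sqrt (2 * a 0 / σ) := mul_comm _ _
      _ = Real.sqrt (x * (2 * a 0 / σ)) := (Real.sqrt_mul hx0.le _).symm
      _ ≤ Real.sqrt (u ^ 2) := Real.sqrt_le_sqrt h3
      _ = u := Real.sqrt_sq hu0.le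
  exact ⟨hlb, hub⟩

lemma aux_tail (f : ℕ → ℝ) (hf : ∀ n, 0 ≤ f n) (hfsum : ∑' n, f n = 1)
    (c₂ : ℝ)
    (hub : ∀ t : ℝ, 0 < t → t < 1 → 1 - ∑' n : ℕ, f n * t ^ n ≤ c₂ * Real.sqrt (1 - t))
    (N : ℕ) (hN : 2 ≤ N) : ∑' n, f (n + N) ≤ 2 * c₂ / Real.sqrt N := by
  have hs := aux_summable_of_tsum_one hfsum
  have hNR : (2:ℝ) ≤ (N:ℝ) := by exact_mod_cast hN
  set t : ℝ := 1 - 1/(N:ℝ) with htdef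
  have ht0 : 0 < t := by
    have : 1/(N:ℝ) ≤ 1/2 := by
      apply one_div_le_one_div_of_le <;> linarith
    simp only [htdef]; linarith
  have ht1 : t < 1 := by
    have : 0 < 1/(N:ℝ) := by positivity
    simp only [htdef]; linarith
  have hx : 1 - t = 1/(N:ℝ) := by simp [htdef]
  -- tail of f is summable
  have hstail : Summable (fun n => f (n + N)) := by
    exact (summable_nat_add_iff N).mpr hs
  have hT0 : 0 ≤ ∑' n, f (n + N) := tsum_nonneg (fun n => hf _)
  -- t ^ N ≤ 1/2
  have htN : t ^ N ≤ 1/2 := by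
    have h1 : t ≤ Real.exp (-(1/(N:ℝ))) := by
      have := Real.add_one_le_exp (-(1/(N:ℝ)))
      simp only [htdef]; linarith
    have h2 : t ^ N ≤ Real.exp (-(1/(N:ℝ))) ^ N := pow_le_pow_left₀ ht0.le h1 N
    have h3 : Real.exp (-(1/(N:ℝ))) ^ N = Real.exp (-(1/(N:ℝ)) * N) := by
      rw [← Real.exp_nat_mul]; ring_nf
    have hNne : (N:ℝ) ≠ 0 := by linarith
    have h4 : -(1/(N:ℝ)) * N = -1 := by field_simp
    have h5 : Real.exp (-1) ≤ 1/2 := by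
      rw [Real.exp_neg]
      rw [inv_le_comm₀ (Real.exp_pos 1) (by norm_num)]
      have := Real.add_one_le_exp 1
      linarith
    calc t ^ N ≤ Real.exp (-(1/(N:ℝ))) ^ N := h2
      _ = Real.exp (-1) := by rw [h3, h4]
      _ ≤ 1/2 := h5
  -- 1 - F t ≥ (1 - t^N) * T N
  have hsF : Summable (fun n => f n * t ^ n) := aux_summable_pow hf hs ht0.le ht1.le
  have hsub : Summable (fun n => f n - f n * t ^ n) := hs.sub hsF
  have hsplit : 1 - ∑' n, f n * t ^ n = ∑' n, (f n - f n * t ^ n) := by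
    rw [Summable.tsum_sub hs hsF, hfsum]
  have hterm0 : ∀ n, 0 ≤ f n - f n * t ^ n := by
    intro n
    have h1 : t ^ n ≤ 1 := pow_le_one₀ ht0.le ht1.le
    nlinarith [hf n]
  have hlow : (1/2) * ∑' n, f (n + N) ≤ 1 - ∑' n, f n * t ^ n := by
    rw [hsplit]
    rw [← Summable.sum_add_tsum_nat_add N hsub]
    have h1 : 0 ≤ ∑ i ∈ Finset.range N, (f i - f i * t ^ i) :=
      Finset.sum_nonneg (fun i _ => hterm0 i)
    have h2 : (1/2) * ∑' n, f (n + N) ≤ ∑' (i : ℕ), (f (i + N) - f (i + N) * t ^ (i + N)) := by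
      rw [← tsum_mul_left]
      refine Summable.tsum_le_tsum (fun i => ?_) (hstail.mul_left _) ((summable_nat_add_iff N).mpr hsub)
      have h3 : t ^ (i + N) ≤ t ^ N := by
        apply pow_le_pow_of_le_one ht0.le ht1.le
        omega
      have h4 : t ^ (i+N) ≤ 1/2 := le_trans h3 htN
      nlinarith [hf (i + N)]
    linarith
  have hup := hub t ht0 ht1
  rw [hx] at hup
  have hsqrt : Real.sqrt (1/(N:ℝ)) = 1 / Real.sqrt N := by
    rw [one_div, Real.sqrt_inv, one_div]
  have hsN : 0 < Real.sqrt N := Real.sqrt_pos.mpr (by linarith)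
  rw [hsqrt] at hup
  calc ∑' n, f (n + N) ≤ 2 * (1 - ∑' n, f n * t ^ n) := by linarith
    _ ≤ 2 * (c₂ * (1 / Real.sqrt N)) := by linarith
    _ = 2 * c₂ / Real.sqrt N := by ring

lemma aux_one_sub_pow {t : ℝ} (h0 : 0 ≤ t) (h1 : t ≤ 1) (n : ℕ) :
    1 - t ^ n ≤ (n:ℝ) * (1 - t) := by
  have hg : (1 - t) * ∑ k ∈ Finset.range n, t ^ k = 1 - t ^ n := by
    linear_combination -geom_sum_mul t n
  rw [← hg]
  have hc : ∑ k ∈ Finset.range n, t ^ k ≤ (n:ℝ) := by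
    calc ∑ k ∈ Finset.range n, t ^ k ≤ ∑ k ∈ Finset.range n, 1 :=
          Finset.sum_le_sum (fun k _ => pow_le_one₀ h0 h1)
      _ = (n:ℝ) := by simp
  calc (1 - t) * ∑ k ∈ Finset.range n, t ^ k ≤ (1 - t) * (n:ℝ) :=
        mul_le_mul_of_nonneg_left hc (by linarith)
    _ = (n:ℝ) * (1 - t) := mul_comm _ _

lemma aux_one_sub_pow_rpow {t α : ℝ} (h0 : 0 ≤ t) (h1 : t ≤ 1)
    (hα0 : 0 < α) (hα1 : α ≤ 1) (n : ℕ) :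
    1 - t ^ n ≤ ((n:ℝ) * (1 - t)) ^ α := by
  rcases Nat.eq_zero_or_pos n with hn | hn
  · subst hn; simp [Real.zero_rpow (ne_of_gt hα0)]
  rcases le_or_gt 1 ((n:ℝ) * (1 - t)) with h | h
  · have h2 : t ^ n ≥ 0 := pow_nonneg h0 n
    have h3 : (1:ℝ) = (1:ℝ) ^ α := (Real.one_rpow α).symm
    calc 1 - t ^ n ≤ 1 := by linarith
      _ = (1:ℝ) ^ α := h3
      _ ≤ ((n:ℝ) * (1 - t)) ^ α := Real.rpow_le_rpow (by norm_num) h hα0.le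
  · have hy0 : 0 ≤ (n:ℝ) * (1 - t) := by
      have : (0:ℝ) ≤ n := Nat.cast_nonneg n
      nlinarith
    rcases eq_or_lt_of_le hy0 with heq | hlt
    · -- n*(1-t) = 0, so t = 1 since n ≥ 1
      have hn1 : (1:ℝ) ≤ (n:ℝ) := by exact_mod_cast hn
      have ht1 : t = 1 := by nlinarith [heq]
      subst ht1
      simp [Real.zero_rpow (ne_of_gt hα0)]
    · calc 1 - t ^ n ≤ (n:ℝ) * (1 - t) := aux_one_sub_pow h0 h1 n
        _ = ((n:ℝ) * (1 - t)) ^ (1:ℝ) := (Real.rpow_one _).symm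
        _ ≤ ((n:ℝ) * (1 - t)) ^ α := Real.rpow_le_rpow_of_exponent_ge hlt h.le hα1

lemma aux_rpow_diff {α : ℝ} (hα0 : 0 ≤ α) (hα1 : α ≤ 1) (k : ℕ) (hk : 1 ≤ k) :
    ((k:ℝ) + 1) ^ α - (k:ℝ) ^ α ≤ α * (k:ℝ) ^ (α - 1) := by
  have hk1 : (1:ℝ) ≤ (k:ℝ) := by exact_mod_cast hk
  have hklt : (k:ℝ) < (k:ℝ) + 1 := by linarith
  have hcont : ContinuousOn (fun x : ℝ => x ^ α) (Set.Icc (k:ℝ) ((k:ℝ) + 1)) := by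
    intro x hx
    have hx0 : x ≠ 0 := by
      have := hx.1
      intro hc; rw [hc] at this; linarith
    exact (Real.continuousAt_rpow_const x α (Or.inl hx0)).continuousWithinAt
  have hderiv : ∀ x ∈ Set.Ioo (k:ℝ) ((k:ℝ) + 1),
      HasDerivAt (fun x : ℝ => x ^ α) (α * x ^ (α - 1)) x := by
    intro x hx
    have hx0 : x ≠ 0 := by
      have := hx.1
      intro hc; rw [hc] at this; linarith
    exact Real.hasDerivAt_rpow_const (Or.inl hx0)
  obtain ⟨c, hc, hceq⟩ := exists_hasDerivAt_eq_slope (fun x : ℝ => x ^ α)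
    (fun x => α * x ^ (α - 1)) hklt hcont hderiv
  have hden : ((k:ℝ) + 1) - (k:ℝ) = 1 := by ring
  rw [hden, div_one] at hceq
  rw [← hceq]
  have hck : (c:ℝ) ^ (α - 1) ≤ (k:ℝ) ^ (α - 1) :=
    Real.rpow_le_rpow_of_nonpos (by linarith) hc.1.le (by linarith)
  exact mul_le_mul_of_nonneg_left hck hα0

lemma aux_rpow_telescope {α : ℝ} (hα0 : 0 < α) (hα1 : α < 1) (n : ℕ) :
    (n:ℝ) ^ α ≤ 1 + α * ∑ k ∈ Finset.Ico 1 n, (k:ℝ) ^ (α - 1) := by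
  induction n with
  | zero => simp [Real.zero_rpow (ne_of_gt hα0)]
  | succ p ih =>
    rcases Nat.eq_zero_or_pos p with hp | hp
    · subst hp; simp
  
    · have hd := aux_rpow_diff hα0.le hα1.le p hp
      rw [Finset.sum_Ico_succ_top hp]
      have hcast : ((p:ℕ) + 1 : ℕ) = (p + 1 : ℕ) := rfl
      have h2 : (((p:ℕ) + 1 : ℕ) : ℝ) = (p:ℝ) + 1 := by push_cast; ring
      rw [h2]
      have hs : 0 ≤ (p:ℝ) ^ (α - 1) := Real.rpow_nonneg (Nat.cast_nonneg p) _
      nlinarith [ih, hd]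

lemma aux_forward (f : ℕ → ℝ) (hf : ∀ n, 0 ≤ f n) (hfsum : ∑' n, f n = 1)
    (c₂ : ℝ) (hc₂ : 0 ≤ c₂)
    (htail : ∀ N : ℕ, 2 ≤ N → ∑' n, f (n + N) ≤ 2 * c₂ / Real.sqrt N)
    {α : ℝ} (hα0 : 0 < α) (hαh : α < 1/2) :
    Summable (fun n : ℕ => f n * (n:ℝ) ^ α) := by
  have hs := aux_summable_of_tsum_one hfsum
  have hM : Summable (fun k : ℕ => (k:ℝ) ^ (α - 3/2)) :=
    Real.summable_nat_rpow.mpr (by linarith)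
  set M : ℝ := ∑' k : ℕ, (k:ℝ) ^ (α - 3/2) with hMdef
  refine summable_of_sum_range_le
    (fun n => mul_nonneg (hf n) (Real.rpow_nonneg (Nat.cast_nonneg n) α)) (c := 1 + α * (2 * c₂ * M)) ?_
  intro K
  -- step 1: termwise telescope bound
  have step1 : ∑ n ∈ Finset.range K, f n * (n:ℝ) ^ α
      ≤ ∑ n ∈ Finset.range K, f n * (1 + α * ∑ k ∈ Finset.Ico 1 n, (k:ℝ) ^ (α - 1)) :=
    Finset.sum_le_sum (fun n _ =>
      mul_le_mul_of_nonneg_left (aux_rpow_telescope hα0 (by linarith) n) (hf n))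
  -- step 2: expand
  have step2 : ∑ n ∈ Finset.range K, f n * (1 + α * ∑ k ∈ Finset.Ico 1 n, (k:ℝ) ^ (α - 1))
      = (∑ n ∈ Finset.range K, f n)
        + α * ∑ n ∈ Finset.range K, ∑ k ∈ Finset.Ico 1 n, f n * (k:ℝ) ^ (α - 1) := by
    rw [Finset.mul_sum, ← Finset.sum_add_distrib]
    refine Finset.sum_congr rfl (fun n _ => ?_)
    rw [← Finset.mul_sum]
    ring
  -- head ≤ 1
  have hhead : ∑ n ∈ Finset.range K, f n ≤ 1 := by
    rw [← hfsum]
    exact Summable.sum_le_tsum _ (fun n _ => hf n) hs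
  -- swap the double sum
  have hswap : ∑ n ∈ Finset.range K, ∑ k ∈ Finset.Ico 1 n, f n * (k:ℝ) ^ (α - 1)
      = ∑ k ∈ Finset.Ico 1 K, ∑ n ∈ Finset.range K,
          (if k < n then f n * (k:ℝ) ^ (α - 1) else 0) := by
    rw [← Finset.sum_comm]
    refine Finset.sum_congr rfl (fun n hn => ?_)
    have hn' : n ≤ K := (Finset.mem_range.mp hn).le
    rw [← Finset.sum_filter, Finset.Ico_filter_lt, min_eq_right hn']
  -- inner sums
  have hinner : ∀ k ∈ Finset.Ico 1 K,
      ∑ n ∈ Finset.range K, (if k < n then f n * (k:ℝ) ^ (α - 1) else 0)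
        ≤ 2 * c₂ * (k:ℝ) ^ (α - 3/2) := by
    intro k hk
    obtain ⟨hk1, hkK⟩ := Finset.mem_Ico.mp hk
    have hk1R : (1:ℝ) ≤ (k:ℝ) := by exact_mod_cast hk1
    have hkpos : (0:ℝ) < (k:ℝ) := by linarith
    have hkpow : (0:ℝ) ≤ (k:ℝ) ^ (α - 1) := Real.rpow_nonneg hkpos.le _
    have h1 : ∑ n ∈ Finset.range K, (if k < n then f n * (k:ℝ) ^ (α - 1) else 0)
        = (k:ℝ) ^ (α - 1) * ∑ n ∈ Finset.range K, (if k < n then f n else 0) := by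
      rw [Finset.mul_sum]
      refine Finset.sum_congr rfl (fun n _ => ?_)
      split_ifs <;> ring
    have h2 : ∑ n ∈ Finset.range K, (if k < n then f n else 0)
        = ∑ n ∈ Finset.Ico (k+1) K, f n := by
      rw [← Finset.sum_filter]
      congr 1
      ext n
      simp [Finset.mem_filter, Finset.mem_Ico, Finset.mem_range]
      omega
    have h3 : ∑ n ∈ Finset.Ico (k+1) K, f n ≤ ∑' n, f (n + (k+1)) := by
      rw [Finset.sum_Ico_eq_sum_range]
      have hcongr : ∀ i ∈ Finset.range (K - (k+1)), f (k + 1 + i) = f (i + (k+1)) := by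
        intro i _
        rw [add_comm]
      rw [Finset.sum_congr rfl hcongr]
      exact Summable.sum_le_tsum _ (fun i _ => hf _) ((summable_nat_add_iff (k+1)).mpr hs)
    have h4 : ∑' n, f (n + (k+1)) ≤ 2 * c₂ / Real.sqrt ((k:ℝ)+1) := by
      have := htail (k+1) (by omega)
      push_cast at this
      exact this
    have h5 : 2 * c₂ / Real.sqrt ((k:ℝ)+1) ≤ 2 * c₂ * (k:ℝ) ^ (-(1/2) : ℝ) := by
      have hsk : Real.sqrt (k:ℝ) ≤ Real.sqrt ((k:ℝ)+1) := Real.sqrt_le_sqrt (by linarith)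
      have hskpos : 0 < Real.sqrt (k:ℝ) := Real.sqrt_pos.mpr hkpos
      have h6 : 1 / Real.sqrt ((k:ℝ)+1) ≤ 1 / Real.sqrt (k:ℝ) :=
        one_div_le_one_div_of_le hskpos hsk
      have h7 : (k:ℝ) ^ (-(1/2) : ℝ) = 1 / Real.sqrt (k:ℝ) := by
        rw [Real.rpow_neg hkpos.le, Real.sqrt_eq_rpow]
        exact (one_div _).symm
      rw [h7, div_eq_mul_one_div]
      exact mul_le_mul_of_nonneg_left h6 (by linarith)
    have h8 : (k:ℝ) ^ (α - 1) * ((k:ℝ) ^ (-(1/2):ℝ)) = (k:ℝ) ^ (α - 3/2) := by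
      rw [← Real.rpow_add hkpos]
      congr 1
      ring
    calc ∑ n ∈ Finset.range K, (if k < n then f n * (k:ℝ) ^ (α - 1) else 0)
        = (k:ℝ) ^ (α - 1) * ∑ n ∈ Finset.range K, (if k < n then f n else 0) := h1
      _ ≤ (k:ℝ) ^ (α - 1) * (2 * c₂ * (k:ℝ) ^ (-(1/2) : ℝ)) := by
          have hc : ∑ n ∈ Finset.range K, (if k < n then f n else 0)
              ≤ 2 * c₂ * (k:ℝ) ^ (-(1/2) : ℝ) := by
            rw [h2]
            exact le_trans h3 (le_trans h4 h5)
          exact mul_le_mul_of_nonneg_left hc hkpow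
      _ = 2 * c₂ * ((k:ℝ) ^ (α - 1) * (k:ℝ) ^ (-(1/2):ℝ)) := by ring
      _ = 2 * c₂ * (k:ℝ) ^ (α - 3/2) := by rw [h8]
  have hsumk : ∑ k ∈ Finset.Ico 1 K, 2 * c₂ * (k:ℝ) ^ (α - 3/2) ≤ 2 * c₂ * M := by
    rw [← Finset.mul_sum]
    refine mul_le_mul_of_nonneg_left ?_ (by linarith)
    exact Summable.sum_le_tsum _ (fun k _ => Real.rpow_nonneg (Nat.cast_nonneg k) _) hM
  have hW : ∑ n ∈ Finset.range K, ∑ k ∈ Finset.Ico 1 n, f n * (k:ℝ) ^ (α - 1)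
      ≤ 2 * c₂ * M := by
    rw [hswap]
    exact le_trans (Finset.sum_le_sum hinner) hsumk
  calc ∑ n ∈ Finset.range K, f n * (n:ℝ) ^ α
      ≤ ∑ n ∈ Finset.range K, f n * (1 + α * ∑ k ∈ Finset.Ico 1 n, (k:ℝ) ^ (α - 1)) := step1
    _ = (∑ n ∈ Finset.range K, f n)
        + α * ∑ n ∈ Finset.range K, ∑ k ∈ Finset.Ico 1 n, f n * (k:ℝ) ^ (α - 1) := step2
    _ ≤ 1 + α * (2 * c₂ * M) := by
        have := mul_le_mul_of_nonneg_left hW hα0.le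
        linarith

set_option maxHeartbeats 1000000 in
lemma aux_reverse (f : ℕ → ℝ) (hf : ∀ n, 0 ≤ f n) (hfsum : ∑' n, f n = 1)
    (c₁ : ℝ) (hc₁ : 0 < c₁)
    (hlb : ∀ t : ℝ, 0 < t → t < 1 →
      c₁ * Real.sqrt (1 - t) ≤ 1 - ∑' n : ℕ, f n * t ^ n)
    {α : ℝ} (hα0 : 0 < α) (hα1 : α < 1) (hαge : 1/2 ≤ α)
    (hS : Summable (fun n : ℕ => f n * (n:ℝ) ^ α)) : False := by
  have hs := aux_summable_of_tsum_one hfsum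
  set S : ℝ := ∑' n : ℕ, f n * (n:ℝ) ^ α with hSdef
  have hS0 : 0 ≤ S :=
    tsum_nonneg (fun n => mul_nonneg (hf n) (Real.rpow_nonneg (Nat.cast_nonneg n) α))
  have hεtend : Filter.Tendsto (fun N : ℕ => ∑' n : ℕ, f (n + N) * ((n + N : ℕ):ℝ) ^ α)
      Filter.atTop (nhds 0) :=
    tendsto_sum_nat_add (fun n : ℕ => f n * (n:ℝ) ^ α)
  have hε0 : ∀ N : ℕ, 0 ≤ ∑' n : ℕ, f (n + N) * ((n + N : ℕ):ℝ) ^ α := fun N =>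
    tsum_nonneg (fun n => mul_nonneg (hf _) (Real.rpow_nonneg (Nat.cast_nonneg _) α))
  have hclaim : ∀ N : ℕ, c₁ ≤ ∑' n : ℕ, f (n + N) * ((n + N : ℕ):ℝ) ^ α := by
    intro N
    set εN : ℝ := ∑' n : ℕ, f (n + N) * ((n + N : ℕ):ℝ) ^ α with hεNdef
    refine le_of_forall_pos_le_add ?_
    intro δ hδ
    set A : ℝ := (N:ℝ) ^ ((1:ℝ) - α) * S with hAdef
    have hA0 : 0 ≤ A := mul_nonneg (Real.rpow_nonneg (Nat.cast_nonneg N) _) hS0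
    set P : ℝ := A + 1 with hPdef
    have hPpos : 0 < P := by linarith
    have hδP : 0 < δ / P := div_pos hδ hPpos
    set x : ℝ := min ((δ / P) ^ 2) (1/4) with hxdef
    have hx0 : 0 < x := lt_min (by positivity) (by norm_num)
    have hx14 : x ≤ 1/4 := min_le_right _ _
    set t : ℝ := 1 - x with htdef
    have ht0 : 0 < t := by simp only [htdef]; linarith
    have ht1 : t < 1 := by simp only [htdef]; linarith
    have h1t : 1 - t = x := by simp [htdef]
    have hlow := hlb t ht0 ht1
    rw [h1t] at hlow
    have hsF : Summable (fun n => f n * t ^ n) := aux_summable_pow hf hs ht0.le ht1.le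
    have hsub : Summable (fun n => f n - f n * t ^ n) := hs.sub hsF
    have hsplit : 1 - ∑' n, f n * t ^ n = ∑' n, (f n - f n * t ^ n) := by
      rw [Summable.tsum_sub hs hsF, hfsum]
    -- head bound
    have hhead : ∑ n ∈ Finset.range N, (f n - f n * t ^ n) ≤ x * A := by
      have hterm : ∀ n ∈ Finset.range N,
          f n - f n * t ^ n ≤ x * ((N:ℝ) ^ ((1:ℝ) - α) * (f n * (n:ℝ) ^ α)) := by
        intro n hn
        rcases Nat.eq_zero_or_pos n with h0 | hpos
        · subst h0
          simp [Real.zero_rpow (ne_of_gt hα0)]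
        · have hn0 : (0:ℝ) < (n:ℝ) := by exact_mod_cast hpos
          have hnN : (n:ℝ) ≤ (N:ℝ) := by exact_mod_cast (Finset.mem_range.mp hn).le
          have h2 : 1 - t ^ n ≤ (n:ℝ) * x := by
            have := aux_one_sub_pow ht0.le ht1.le n
            rw [h1t] at this
            exact this
          have h3 : (n:ℝ) ≤ (n:ℝ) ^ α * (N:ℝ) ^ ((1:ℝ) - α) := by
            calc (n:ℝ) = (n:ℝ) ^ (α + ((1:ℝ) - α)) := by
                  rw [show α + ((1:ℝ) - α) = 1 by ring, Real.rpow_one]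
              _ = (n:ℝ) ^ α * (n:ℝ) ^ ((1:ℝ) - α) := Real.rpow_add hn0 _ _
              _ ≤ (n:ℝ) ^ α * (N:ℝ) ^ ((1:ℝ) - α) :=
                  mul_le_mul_of_nonneg_left
                    (Real.rpow_le_rpow hn0.le hnN (by linarith))
                    (Real.rpow_nonneg hn0.le α)
          calc f n - f n * t ^ n = f n * (1 - t ^ n) := by ring
            _ ≤ f n * ((n:ℝ) * x) := mul_le_mul_of_nonneg_left h2 (hf n)
            _ ≤ f n * (((n:ℝ) ^ α * (N:ℝ) ^ ((1:ℝ) - α)) * x) := by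
                refine mul_le_mul_of_nonneg_left ?_ (hf n)
                exact mul_le_mul_of_nonneg_right h3 hx0.le
            _ = x * ((N:ℝ) ^ ((1:ℝ) - α) * (f n * (n:ℝ) ^ α)) := by ring
      calc ∑ n ∈ Finset.range N, (f n - f n * t ^ n)
          ≤ ∑ n ∈ Finset.range N, x * ((N:ℝ) ^ ((1:ℝ) - α) * (f n * (n:ℝ) ^ α)) :=
            Finset.sum_le_sum hterm
        _ = x * ((N:ℝ) ^ ((1:ℝ) - α) * ∑ n ∈ Finset.range N, f n * (n:ℝ) ^ α) := by
            rw [← Finset.mul_sum, ← Finset.mul_sum]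
        _ ≤ x * A := by
            rw [hAdef]
            refine mul_le_mul_of_nonneg_left
              (mul_le_mul_of_nonneg_left ?_ (Real.rpow_nonneg (Nat.cast_nonneg N) _)) hx0.le
            exact Summable.sum_le_tsum _
              (fun n _ => mul_nonneg (hf n) (Real.rpow_nonneg (Nat.cast_nonneg n) _)) hS
    -- tail bound
    have htailb : ∑' n, (f (n + N) - f (n + N) * t ^ (n + N)) ≤ x ^ α * εN := by
      have hsubtail : Summable (fun n => f (n + N) - f (n + N) * t ^ (n + N)) :=
        (summable_nat_add_iff N).mpr hsub
      have hstail : Summable (fun n => f (n + N) * ((n + N : ℕ):ℝ) ^ α) :=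
        (summable_nat_add_iff N).mpr hS
      calc ∑' n, (f (n + N) - f (n + N) * t ^ (n + N))
          ≤ ∑' n, x ^ α * (f (n + N) * ((n + N : ℕ):ℝ) ^ α) := by
            refine Summable.tsum_le_tsum (fun n => ?_) hsubtail (hstail.mul_left _)
            have h2 : 1 - t ^ (n + N) ≤ (((n + N : ℕ):ℝ) * x) ^ α := by
              have := aux_one_sub_pow_rpow ht0.le ht1.le hα0 hα1.le (n + N)
              rw [h1t] at this
              push_cast at this ⊢
              exact this
            have h3 : (((n + N : ℕ):ℝ) * x) ^ α = ((n + N : ℕ):ℝ) ^ α * x ^ α :=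
              Real.mul_rpow (Nat.cast_nonneg _) hx0.le
            calc f (n + N) - f (n + N) * t ^ (n + N)
                = f (n + N) * (1 - t ^ (n + N)) := by ring
              _ ≤ f (n + N) * ((((n + N : ℕ):ℝ)) * x) ^ α :=
                  mul_le_mul_of_nonneg_left h2 (hf _)
              _ = x ^ α * (f (n + N) * ((n + N : ℕ):ℝ) ^ α) := by rw [h3]; ring
        _ = x ^ α * εN := tsum_mul_left
    -- combine
    have hcomb : c₁ * Real.sqrt x ≤ x * A + x ^ α * εN := by
      rw [hsplit, ← Summable.sum_add_tsum_nat_add N hsub] at hlow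
      linarith [hhead, htailb]
    have hsx : 0 < Real.sqrt x := Real.sqrt_pos.mpr hx0
    have hxα : x ^ (α - 1/2) * Real.sqrt x = x ^ α := by
      rw [Real.sqrt_eq_rpow, ← Real.rpow_add hx0]
      congr 1; ring
    have hxx : Real.sqrt x * Real.sqrt x = x := Real.mul_self_sqrt hx0.le
    have hdiv : c₁ ≤ Real.sqrt x * A + x ^ (α - 1/2) * εN := by
      refine le_of_mul_le_mul_right ?_ hsx
      calc c₁ * Real.sqrt x ≤ x * A + x ^ α * εN := hcomb
        _ = (Real.sqrt x * Real.sqrt x) * A + (x ^ (α - 1/2) * Real.sqrt x) * εN := by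
            rw [hxx, hxα]
        _ = (Real.sqrt x * A + x ^ (α - 1/2) * εN) * Real.sqrt x := by ring
    -- finish
    have hsqle : Real.sqrt x ≤ δ / P := by
      calc Real.sqrt x ≤ Real.sqrt ((δ / P) ^ 2) := Real.sqrt_le_sqrt (min_le_left _ _)
        _ = δ / P := Real.sqrt_sq hδP.le
    have hfirst : Real.sqrt x * A ≤ δ := by
      calc Real.sqrt x * A ≤ (δ / P) * A := mul_le_mul_of_nonneg_right hsqle hA0
        _ ≤ (δ / P) * P := mul_le_mul_of_nonneg_left (by linarith) hδP.le
        _ = δ := div_mul_cancel₀ δ (ne_of_gt hPpos)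
    have hsecond : x ^ (α - 1/2) * εN ≤ εN := by
      have h1 : x ^ (α - 1/2) ≤ 1 :=
        Real.rpow_le_one hx0.le (by linarith) (by linarith)
      have h2 : 0 ≤ εN := hε0 N
      nlinarith
    linarith
  have : c₁ ≤ 0 := ge_of_tendsto hεtend (Filter.Eventually.of_forall hclaim)
  linarith

/- STATEMENT 13: Corollary 3.2 (1). Null recurrent case (μ = 1) with
G''(1) = ∑ n(n-1) a_n < ∞. F(t) = ∑ f_n t^n is the generating function of the
first return time and satisfies F(t) = t G(F(t)). Then 1 - F(t) ∼ √(1-t) as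
t → 1⁻, and for 0 < α < 1, ∑ f_n n^α < ∞ iff α < 1/2. -/
theorem stmt_13 (a : ℕ → ℝ) (ha : ∀ n, 0 ≤ a n) (ha0 : 0 < a 0)
    (ha01 : a 0 + a 1 < 1)
    (hsum : ∑' n, a n = 1) (hμ : ∑' n : ℕ, (n : ℝ) * a n = 1)
    (hG2 : Summable (fun n : ℕ => (n : ℝ) * ((n : ℝ) - 1) * a n))
    (f : ℕ → ℝ) (hf : ∀ n, 0 ≤ f n) (hf0 : f 0 = 0) (hfsum : ∑' n, f n = 1)
    (hFeq : ∀ t : ℝ, 0 < t → t < 1 →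
      ∑' n : ℕ, f n * t ^ n = t * ∑' n : ℕ, a n * (∑' m : ℕ, f m * t ^ m) ^ n) :
    (∃ c₁ c₂ t₀ : ℝ, 0 < c₁ ∧ c₁ < c₂ ∧ 0 < t₀ ∧ t₀ < 1 ∧
      ∀ t : ℝ, t₀ < t → t < 1 →
        c₁ * Real.sqrt (1 - t) ≤ 1 - ∑' n : ℕ, f n * t ^ n ∧
        1 - ∑' n : ℕ, f n * t ^ n ≤ c₂ * Real.sqrt (1 - t)) ∧
    (∀ α : ℝ, 0 < α → α < 1 →
      (Summable (fun n : ℕ => f n * (n : ℝ) ^ α) ↔ α < 1 / 2)) := by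
  obtain ⟨c₁, c₂, hc₁, hc₂, hbound⟩ := aux_key_s13 a ha ha0 ha01 hsum hμ hG2 f hf hf0 hfsum hFeq
  constructor
  · refine ⟨c₁, c₁ + c₂, 1/2, hc₁, by linarith, by norm_num, by norm_num, ?_⟩
    intro t ht₀ ht1
    have h := hbound t (by linarith) ht1
    refine ⟨h.1, le_trans h.2 ?_⟩
    have := Real.sqrt_nonneg (1 - t)
    nlinarith
  · intro α hα0 hα1
    constructor
    · intro hS
      by_contra hge
      push_neg at hge
      exact aux_reverse f hf hfsum c₁ hc₁ (fun t h0 h1 => (hbound t h0 h1).1) hα0 hα1 hge hS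
    · intro hαlt
      exact aux_forward f hf hfsum c₂ hc₂.le
        (fun N hN => aux_tail f hf hfsum c₂ (fun t h0 h1 => (hbound t h0 h1).2) N hN) hα0 hαlt
end
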